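/- arXiv:math/0402377 — 8 statements merged into one kernel-verified Lean document; each statement's English description precedes it below -/
import Mathlib

section
/- Let (W,S) be a Coxeter system, A a commutative ring, and q : S → A a function such that q_s = q_{s'} whenever s and s' are conjugate in W. Then the free A-module of finitely supported functions W → A, with standard basis (e_w)_{w∈W}, carries a unique structure of an associative unital A-algebra (with A-bilinear multiplication) whose identity element is e_1 and which satisfies, for all s ∈ S and w ∈ W: e_s · e_w = e_{sw} if ℓ(sw) > ℓ(w), and e_s · e_w = q_s·e_{sw} + (q_s − 1)·e_w if ℓ(sw) < ℓ(w). (This algebra is the Hecke algebra A_q[W] of W with multiparameter q.) -/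
namespace HeckeAux

open CoxeterSystem List Finset

variable {B : Type*} {W : Type*} [Group W] {M : CoxeterMatrix B} (cs : CoxeterSystem M W)

local prefix:100 "s" => cs.simple
local prefix:100 "π" => cs.wordProd
local prefix:100 "ℓ" => cs.length

noncomputable scoped instance : DecidableEq W := Classical.decEq W

noncomputable def ind (p : Prop) : ZMod 2 := open Classical in if p then 1 else 0

lemma ind_congr {p q : Prop} (h : p ↔ q) : ind p = ind q := by
  simp only [ind]; split_ifs with h1 h2 <;> tauto

lemma ind_add_self (p : Prop) (e : ZMod 2) : e + ind p + ind p = e := by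
  rw [add_assoc, CharTwo.add_self_eq_zero, add_zero]

noncomputable def etaFun (i : B) : W × ZMod 2 → W × ZMod 2 :=
  fun x => (s i * x.1 * s i, x.2 + ind (x.1 = s i))

lemma simple_conj_eq_simple_iff (i : B) (t : W) : (s i * t * s i = s i) ↔ (t = s i) := by
  constructor
  · intro h
    have := congrArg (fun x => s i * x * s i) h
    simpa [mul_assoc, cs.simple_mul_simple_cancel_left,
      cs.simple_mul_simple_cancel_right] using this
  · rintro rfl; simp [cs.simple_mul_simple_cancel_right]

lemma etaFun_invol (i : B) : Function.Involutive (etaFun cs i) := by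
  rintro ⟨t, e⟩
  simp only [etaFun]
  apply Prod.ext
  · simp [mul_assoc, cs.simple_mul_simple_cancel_left, cs.simple_mul_simple_cancel_right]
  · simp only
    rw [ind_congr (simple_conj_eq_simple_iff cs i t)]
    exact ind_add_self _ _

noncomputable def eta (i : B) : Equiv.Perm (W × ZMod 2) := (etaFun_invol cs i).toPerm

@[simp] lemma eta_apply (i : B) (x : W × ZMod 2) :
    eta cs i x = (s i * x.1 * s i, x.2 + ind (x.1 = s i)) := rfl

section rot
variable (i j : B)

noncomputable def rot : W := s j * s i

lemma simple_mul_rot_pow (k : ℕ) : s j * (rot cs i j)^k * s j = ((rot cs i j)^k)⁻¹ := by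
  have h1 : s j * rot cs i j * s j = (rot cs i j)⁻¹ := by
    simp only [rot, mul_assoc, cs.simple_mul_simple_cancel_left]
    rw [mul_inv_rev, cs.inv_simple, cs.inv_simple]
  have : (MulAut.conj (s j)) ((rot cs i j)^k) = ((rot cs i j)^k)⁻¹ := by
    rw [map_pow, ← inv_pow]
    congr 1
    simpa [MulAut.conj_apply, cs.inv_simple, mul_assoc] using h1
  simpa [MulAut.conj_apply, cs.inv_simple, mul_assoc] using this

lemma rot_pow_mul_simple (k : ℕ) : (rot cs i j)^k * s j = s j * ((rot cs i j)^k)⁻¹ := by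
  have := simple_mul_rot_pow cs i j k
  calc (rot cs i j)^k * s j = s j * (s j * (rot cs i j)^k * s j) := by
        simp [← mul_assoc, cs.simple_mul_simple_cancel_left]
    _ = s j * ((rot cs i j)^k)⁻¹ := by rw [this]

lemma eta_step (t : W) (e : ZMod 2) :
    (eta cs i * eta cs j) (t, e) =
      ((rot cs i j)⁻¹ * t * rot cs i j,
        e + ind (t = (rot cs i j)^0 * s j) + ind (t = (rot cs i j)^1 * s j)) := by
  show eta cs i (eta cs j (t, e)) = _
  simp only [eta_apply]
  apply Prod.ext
  · simp only [rot, mul_inv_rev, cs.inv_simple, mul_assoc]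
  · simp only [pow_zero, pow_one, one_mul]
    congr 1
    apply ind_congr
    rw [rot]
    constructor
    · intro h
      have := congrArg (fun x => s j * x * s j) h
      simpa [mul_assoc, cs.simple_mul_simple_cancel_left,
        cs.simple_mul_simple_cancel_right] using this
    · rintro rfl
      simp [mul_assoc, cs.simple_mul_simple_cancel_left,
        cs.simple_mul_simple_cancel_right]

lemma cond_shift (t : W) (l : ℕ) :
    ((rot cs i j)⁻¹ * t * rot cs i j = (rot cs i j)^l * s j) ↔
      (t = (rot cs i j)^(l+2) * s j) := by
  set p := rot cs i j with hp
  have h1 : s j * p⁻¹ = p * s j := by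
    have := rot_pow_mul_simple cs i j 1
    simp only [pow_one] at this
    rw [this]
  constructor
  · intro h
    have : t = p * (p^l * s j) * p⁻¹ := by
      rw [← h]; group
    rw [this, mul_assoc, mul_assoc, h1]
    rw [pow_add, pow_two]
    group
  · rintro rfl
    rw [pow_add, pow_two]
    have : p⁻¹ * (p ^ l * (p * p) * s j) * p = p ^l * (p * (s j * p)) := by group
    rw [this]
    have h2 : s j * p = p⁻¹ * s j := by
      apply mul_left_cancel (a := p)
      rw [← mul_assoc, ← h1]
      group
    rw [h2]
    group

lemma eta_mul_pow (n : ℕ) (t : W) (e : ZMod 2) :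
    ((eta cs i * eta cs j)^n) (t, e) =
      (((rot cs i j)^n)⁻¹ * t * (rot cs i j)^n,
        e + ∑ l ∈ range (2*n), ind (t = (rot cs i j)^l * s j)) := by
  induction n generalizing t e with
  | zero => simp
  | succ n ih =>
    rw [pow_succ]
    show ((eta cs i * eta cs j)^n) ((eta cs i * eta cs j) (t, e)) = _
    rw [eta_step, ih]
    apply Prod.ext
    · simp only
      group
    · simp only
      have hsum : ∀ l, ind ((rot cs i j)⁻¹ * t * rot cs i j = (rot cs i j)^l * s j)
          = ind (t = (rot cs i j)^(l+2) * s j) := fun l => ind_congr (cond_shift cs i j t l)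
      rw [Finset.sum_congr rfl (fun l _ => hsum l)]
      have : 2 * (n+1) = (2*n + 1) + 1 := by ring
      rw [this, Finset.sum_range_succ', Finset.sum_range_succ']
      simp only [pow_zero, one_mul, pow_one, zero_add, Nat.reduceAdd, show ∀ l : ℕ, l + 1 + 1 = l + 2 from fun l => rfl]
      ring

lemma eta_liftable : M.IsLiftable (fun i => eta cs i) := by
  intro i j
  apply Equiv.ext
  rintro ⟨t, e⟩
  rw [eta_mul_pow]
  have hm : (rot cs i j)^(M i j) = 1 := cs.simple_mul_simple_pow' i j
  apply Prod.ext
  · simp [hm]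
  · simp only [Equiv.Perm.one_apply]
    rw [two_mul, Finset.sum_range_add]
    have : ∀ l, ind (t = (rot cs i j)^(M i j + l) * s j) = ind (t = (rot cs i j)^l * s j) := by
      intro l
      apply ind_congr
      rw [pow_add, hm, one_mul]
    rw [Finset.sum_congr rfl (fun l _ => this l)]
    rw [CharTwo.add_self_eq_zero, add_zero]

end rot

section phi

noncomputable def phi : W →* Equiv.Perm (W × ZMod 2) :=
  cs.lift ⟨fun i => eta cs i, eta_liftable cs⟩

@[simp] lemma phi_simple (i : B) : phi cs (s i) = eta cs i :=
  cs.lift_apply_simple (eta_liftable cs) i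

noncomputable def mu (w t : W) : ZMod 2 := (phi cs w (t, 0)).2

@[simp] lemma mu_one (t : W) : mu cs 1 t = 0 := by
  simp [mu]

lemma phi_apply (w t : W) (e : ZMod 2) :
    phi cs w (t, e) = (w * t * w⁻¹, e + mu cs w t) := by
  induction w using cs.simple_induction_left generalizing t e with
  | one => simp [mu]
  | mul_simple_left w i ih =>
    have key : ∀ e', phi cs (s i * w) (t, e') =
        (s i * (w * t * w⁻¹) * s i, e' + mu cs w t + ind (w * t * w⁻¹ = s i)) := by
      intro e'
      rw [map_mul, Equiv.Perm.mul_apply, ih t e', phi_simple, eta_apply]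
    have hmu : mu cs (s i * w) t = mu cs w t + ind (w * t * w⁻¹ = s i) := by
      rw [mu, key 0, zero_add]
    rw [key e, hmu]
    apply Prod.ext
    · simp only [mul_inv_rev, cs.inv_simple, mul_assoc]
    · simp only; ring

lemma mu_simple_mul (i : B) (w t : W) :
    mu cs (s i * w) t = mu cs w t + ind (w * t * w⁻¹ = s i) := by
  rw [mu, map_mul, Equiv.Perm.mul_apply, phi_apply cs w t 0, phi_simple, eta_apply]
  simp only [zero_add]

lemma mu_wordProd (ω : List B) (t : W) :
    mu cs (π ω) t = (List.count t (cs.rightInvSeq ω) : ZMod 2) := by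
  classical
  induction ω with
  | nil => simp
  | cons i ω ih =>
    rw [cs.wordProd_cons, mu_simple_mul, ih]
    show _ = ((List.count t (((π ω)⁻¹ * (s i) * (π ω)) :: cs.rightInvSeq ω) : ℕ) : ZMod 2)
    rw [List.count_cons]
    simp only [beq_iff_eq]
    push_cast
    have : ind (π ω * t * (π ω)⁻¹ = s i) = (if (π ω)⁻¹ * s i * π ω = t then (1 : ZMod 2) else 0) := by
      have hiff : (π ω * t * (π ω)⁻¹ = s i) ↔ ((π ω)⁻¹ * s i * π ω = t) := by
        constructor
        · intro h; rw [← h]; group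
        · intro h; rw [← h]; group
      rw [ind_congr hiff]
      split_ifs with h <;> simp [ind, h]
    rw [this]
end phi

section descent

lemma mu_eq_zero_of_not_isRightDescent (w : W) (i : B) (h : ¬ cs.IsRightDescent w i) :
    mu cs w (s i) = 0 := by
  classical
  obtain ⟨ω, hred, rfl⟩ := cs.exists_reduced_word' w
  rw [mu_wordProd]
  have hnotmem : s i ∉ cs.rightInvSeq ω := by
    intro hmem
    exact h (cs.isRightInversion_of_mem_rightInvSeq hred hmem).2
  rw [List.count_eq_zero_of_not_mem hnotmem]
  simp

lemma mu_eq_one_of_isRightDescent (w : W) (i : B) (h : cs.IsRightDescent w i) :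
    mu cs w (s i) = 1 := by
  classical
  have hv : (w * s i) * s i = w := cs.simple_mul_simple_cancel_right i
  obtain ⟨ω, hred, hw⟩ := cs.exists_reduced_word' (w * s i)
  have hword : w = π (ω.concat i) := by
    rw [cs.wordProd_concat, ← hw, hv]
  rw [hword, mu_wordProd, cs.rightInvSeq_concat]
  have hnotmem : s i ∉ cs.rightInvSeq ω := by
    intro hmem
    have hlt := (cs.isRightInversion_of_mem_rightInvSeq hred hmem).2
    rw [← hw, hv] at hlt
    have h' : ℓ (w * s i) < ℓ w := h
    omega
  have hnotmem2 : s i ∉ List.map (MulAut.conj (s i)) (cs.rightInvSeq ω) := by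
    intro hmem
    obtain ⟨t, ht, hconj⟩ := List.mem_map.mp hmem
    apply hnotmem
    have : t = s i := by
      have := hconj
      simp only [MulAut.conj_apply, cs.inv_simple] at this
      exact (simple_conj_eq_simple_iff cs i t).mp this
    rwa [← this]
  rw [List.concat_eq_append, List.count_append]
  rw [List.count_eq_zero_of_not_mem hnotmem2]
  simp

lemma key_Z (i j : B) (w : W) (h1 : ¬ cs.IsRightDescent w j)
    (h2 : cs.IsRightDescent (s i * w) j) :
    s i * w = w * s j ∧ IsConj (s j) (s i) := by
  have hmu1 : mu cs (s i * w) (s j) = 1 := mu_eq_one_of_isRightDescent cs _ j h2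
  rw [mu_simple_mul, mu_eq_zero_of_not_isRightDescent cs w j h1, zero_add] at hmu1
  have hcond : w * s j * w⁻¹ = s i := by
    by_contra hc
    rw [ind, if_neg hc] at hmu1
    exact absurd hmu1 (by decide)
  constructor
  · rw [← hcond]; group
  · exact isConj_iff.mpr ⟨w, hcond⟩

end descent

section ops

variable (A : Type*) [CommRing A] (q : B → A)

noncomputable def Ts (i : B) (w : W) : W →₀ A :=
  if ℓ w < ℓ (s i * w) then Finsupp.single (s i * w) 1
  else q i • Finsupp.single (s i * w) 1 + (q i - 1) • Finsupp.single w 1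

noncomputable def Us (j : B) (w : W) : W →₀ A :=
  if ℓ w < ℓ (w * s j) then Finsupp.single (w * s j) 1
  else q j • Finsupp.single (w * s j) 1 + (q j - 1) • Finsupp.single w 1

lemma Ts_pos (i : B) (w : W) (h : ℓ w < ℓ (s i * w)) :
    Ts cs A q i w = Finsupp.single (s i * w) 1 := if_pos h

lemma Ts_neg (i : B) (w : W) (h : ¬ ℓ w < ℓ (s i * w)) :
    Ts cs A q i w = q i • Finsupp.single (s i * w) 1 + (q i - 1) • Finsupp.single w 1 :=
  if_neg h

lemma Us_pos (j : B) (w : W) (h : ℓ w < ℓ (w * s j)) :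
    Us cs A q j w = Finsupp.single (w * s j) 1 := if_pos h

lemma Us_neg (j : B) (w : W) (h : ¬ ℓ w < ℓ (w * s j)) :
    Us cs A q j w = q j • Finsupp.single (w * s j) 1 + (q j - 1) • Finsupp.single w 1 :=
  if_neg h

noncomputable def Lop (i : B) : (W →₀ A) →ₗ[A] (W →₀ A) :=
  Finsupp.linearCombination A (Ts cs A q i)

noncomputable def Rop (j : B) : (W →₀ A) →ₗ[A] (W →₀ A) :=
  Finsupp.linearCombination A (Us cs A q j)

@[simp] lemma Lop_single (i : B) (w : W) (c : A) :
    Lop cs A q i (Finsupp.single w c) = c • Ts cs A q i w :=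
  Finsupp.linearCombination_single A c w

@[simp] lemma Rop_single (j : B) (w : W) (c : A) :
    Rop cs A q j (Finsupp.single w c) = c • Us cs A q j w :=
  Finsupp.linearCombination_single A c w

variable {A₀ : Type} 

lemma key_comm_single (hq : ∀ i j : B, IsConj (cs.simple i) (cs.simple j) → q i = q j)
    (i j : B) (w : W) :
    Lop cs A q i (Us cs A q j w) = Rop cs A q j (Ts cs A q i w) := by
  rcases cs.length_simple_mul w i with h1 | h1 <;> rcases cs.length_mul_simple w j with h2 | h2
  · -- both ascents
    rcases cs.length_simple_mul (w * s j) i with h3 | h3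
    · -- C1a : all the way up
      have lhs : Lop cs A q i (Us cs A q j w) = Finsupp.single (s i * (w * s j)) 1 := by
        rw [Us_pos cs A q j w (by omega), Lop_single, one_smul,
          Ts_pos cs A q i (w * s j) (by omega)]
      have rhs : Rop cs A q j (Ts cs A q i w) = Finsupp.single ((s i * w) * s j) 1 := by
        rw [Ts_pos cs A q i w (by omega), Rop_single, one_smul,
          Us_pos cs A q j (s i * w) (by rw [mul_assoc]; omega)]
      rw [lhs, rhs, mul_assoc]
    · -- C1b : Z-lemma case
      obtain ⟨heq, hconj⟩ := key_Z cs i j w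
        (by unfold CoxeterSystem.IsRightDescent; omega)
        (by unfold CoxeterSystem.IsRightDescent; rw [mul_assoc]; omega)
      have hqij : q i = q j := hq i j hconj.symm
      have lhs : Lop cs A q i (Us cs A q j w) =
          q i • Finsupp.single (s i * (w * s j)) 1 + (q i - 1) • Finsupp.single (w * s j) 1 := by
        rw [Us_pos cs A q j w (by omega), Lop_single, one_smul,
          Ts_neg cs A q i (w * s j) (by omega)]
      have rhs : Rop cs A q j (Ts cs A q i w) =
          q j • Finsupp.single ((s i * w) * s j) 1 + (q j - 1) • Finsupp.single (s i * w) 1 := by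
        rw [Ts_pos cs A q i w (by omega), Rop_single, one_smul,
          Us_neg cs A q j (s i * w) (by rw [mul_assoc]; omega)]
      rw [lhs, rhs, mul_assoc, hqij, heq]
  · -- C2 : s-ascent, t-descent
    have h3 : ℓ (s i * (w * s j)) = ℓ w := by
      rcases cs.length_simple_mul (w * s j) i with h3 | h3 <;>
        rcases cs.length_mul_simple (s i * w) j with h4 | h4 <;>
          rw [mul_assoc] at h4 <;> omega
    have lhs : Lop cs A q i (Us cs A q j w) =
        q j • Finsupp.single (s i * (w * s j)) 1 + (q j - 1) • Finsupp.single (s i * w) 1 := by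
      rw [Us_neg cs A q j w (by omega), map_add, map_smul, map_smul, Lop_single, one_smul,
        Lop_single, one_smul, Ts_pos cs A q i (w * s j) (by omega),
        Ts_pos cs A q i w (by omega)]
    have rhs : Rop cs A q j (Ts cs A q i w) =
        q j • Finsupp.single ((s i * w) * s j) 1 + (q j - 1) • Finsupp.single (s i * w) 1 := by
      rw [Ts_pos cs A q i w (by omega), Rop_single, one_smul,
        Us_neg cs A q j (s i * w) (by rw [mul_assoc]; omega)]
    rw [lhs, rhs, mul_assoc]
  · -- C3 : s-descent, t-ascent
    have h3 : ℓ (s i * (w * s j)) = ℓ w := by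
      rcases cs.length_simple_mul (w * s j) i with h3 | h3 <;>
        rcases cs.length_mul_simple (s i * w) j with h4 | h4 <;>
          rw [mul_assoc] at h4 <;> omega
    have lhs : Lop cs A q i (Us cs A q j w) =
        q i • Finsupp.single (s i * (w * s j)) 1 + (q i - 1) • Finsupp.single (w * s j) 1 := by
      rw [Us_pos cs A q j w (by omega), Lop_single, one_smul,
        Ts_neg cs A q i (w * s j) (by omega)]
    have rhs : Rop cs A q j (Ts cs A q i w) =
        q i • Finsupp.single ((s i * w) * s j) 1 + (q i - 1) • Finsupp.single (w * s j) 1 := by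
      rw [Ts_neg cs A q i w (by omega), map_add, map_smul, map_smul, Rop_single, one_smul,
        Rop_single, one_smul, Us_pos cs A q j (s i * w) (by rw [mul_assoc]; omega),
        Us_pos cs A q j w (by omega)]
    rw [lhs, rhs, mul_assoc]
  · -- both descents
    rcases cs.length_mul_simple (s i * w) j with h3 | h3
    · -- C4b : Z-lemma case
      rw [mul_assoc] at h3
      obtain ⟨heq', hconj⟩ := key_Z cs i (j := j) (w := s i * w)
        (by unfold CoxeterSystem.IsRightDescent; rw [mul_assoc]; omega)
        (by
          unfold CoxeterSystem.IsRightDescent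
          rw [show s i * (s i * w) * s j = w * s j from by
            rw [show s i * (s i * w) * s j = (s i * (s i * w)) * s j from by group,
              cs.simple_mul_simple_cancel_left]]
          rw [cs.simple_mul_simple_cancel_left]
          omega)
      rw [cs.simple_mul_simple_cancel_left] at heq'
      have heq : s i * w = w * s j := by
        have := congrArg (fun x => s i * x) heq'
        simpa [← mul_assoc, cs.simple_mul_simple_cancel_left] using this
      have hqij : q i = q j := hq i j hconj.symm
      have h4 : ℓ (s i * (w * s j)) = ℓ w := by
        rw [← heq, cs.simple_mul_simple_cancel_left]
      have lhs : Lop cs A q i (Us cs A q j w) =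
          q j • Finsupp.single (s i * (w * s j)) 1 +
            (q j - 1) • (q i • Finsupp.single (s i * w) 1 + (q i - 1) • Finsupp.single w 1) := by
        rw [Us_neg cs A q j w (by omega), map_add, map_smul, map_smul, Lop_single, one_smul,
          Lop_single, one_smul, Ts_pos cs A q i (w * s j) (by omega),
          Ts_neg cs A q i w (by omega)]
      have rhs : Rop cs A q j (Ts cs A q i w) =
          q i • Finsupp.single ((s i * w) * s j) 1 +
            (q i - 1) • (q j • Finsupp.single (w * s j) 1 + (q j - 1) • Finsupp.single w 1) := by
        rw [Ts_neg cs A q i w (by omega), map_add, map_smul, map_smul, Rop_single, one_smul,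
          Rop_single, one_smul, Us_pos cs A q j (s i * w) (by rw [mul_assoc]; omega),
          Us_neg cs A q j w (by omega)]
      rw [lhs, rhs, mul_assoc, hqij, heq]
    · -- C4a : all the way down
      rw [mul_assoc] at h3
      have lhs : Lop cs A q i (Us cs A q j w) =
          q j • (q i • Finsupp.single (s i * (w * s j)) 1 +
              (q i - 1) • Finsupp.single (w * s j) 1) +
            (q j - 1) • (q i • Finsupp.single (s i * w) 1 + (q i - 1) • Finsupp.single w 1) := by
        rw [Us_neg cs A q j w (by omega), map_add, map_smul, map_smul, Lop_single, one_smul,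
          Lop_single, one_smul, Ts_neg cs A q i (w * s j) (by omega),
          Ts_neg cs A q i w (by omega)]
      have rhs : Rop cs A q j (Ts cs A q i w) =
          q i • (q j • Finsupp.single ((s i * w) * s j) 1 +
              (q j - 1) • Finsupp.single (s i * w) 1) +
            (q i - 1) • (q j • Finsupp.single (w * s j) 1 + (q j - 1) • Finsupp.single w 1) := by
        rw [Ts_neg cs A q i w (by omega), map_add, map_smul, map_smul, Rop_single, one_smul,
          Rop_single, one_smul, Us_neg cs A q j (s i * w) (by rw [mul_assoc]; omega),
          Us_neg cs A q j w (by omega)]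
      rw [lhs, rhs, mul_assoc]
      module

lemma Lop_Rop_comm (hq : ∀ i j : B, IsConj (cs.simple i) (cs.simple j) → q i = q j)
    (i j : B) :
    (Lop cs A q i) ∘ₗ (Rop cs A q j) = (Rop cs A q j) ∘ₗ (Lop cs A q i) := by
  apply Finsupp.lhom_ext
  intro w c
  simp only [LinearMap.comp_apply, Lop_single, Rop_single, map_smul]
  rw [key_comm_single cs A q hq i j w]

end ops
section aw

variable (A : Type*) [CommRing A] (q : B → A)

noncomputable def aw : W → ((W →₀ A) →ₗ[A] (W →₀ A)) := fun w =>
  if h : w = 1 then LinearMap.id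
  else
    (Lop cs A q (Classical.choose (cs.exists_leftDescent_of_ne_one h))) ∘ₗ
      (aw (cs.simple (Classical.choose (cs.exists_leftDescent_of_ne_one h)) * w))
termination_by w => cs.length w
decreasing_by exact Classical.choose_spec (cs.exists_leftDescent_of_ne_one h)

lemma aw_one : aw cs A q 1 = LinearMap.id := by
  rw [aw]
  simp

lemma aw_ne_one (w : W) (h : w ≠ 1) :
    aw cs A q w =
      (Lop cs A q (Classical.choose (cs.exists_leftDescent_of_ne_one h))) ∘ₗ
        (aw cs A q (cs.simple (Classical.choose (cs.exists_leftDescent_of_ne_one h)) * w)) := by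
  rw [aw]
  simp only [h, dite_false]

lemma aw_comm_aux (hq : ∀ i j : B, IsConj (cs.simple i) (cs.simple j) → q i = q j)
    (n : ℕ) : ∀ w : W, ℓ w ≤ n → ∀ j : B,
    (aw cs A q w) ∘ₗ (Rop cs A q j) = (Rop cs A q j) ∘ₗ (aw cs A q w) := by
  induction n with
  | zero =>
    intro w hw j
    have : w = 1 := cs.length_eq_zero_iff.mp (Nat.le_zero.mp hw)
    subst this
    rw [aw_one]
    ext x
    simp
  | succ n ih =>
    intro w hw j
    by_cases h : w = 1
    · subst h
      rw [aw_one]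
      ext x
      simp
    · rw [aw_ne_one cs A q w h]
      set i := Classical.choose (cs.exists_leftDescent_of_ne_one h) with hi
      have hdesc : cs.IsLeftDescent w i := Classical.choose_spec (cs.exists_leftDescent_of_ne_one h)
      have hlen : ℓ (s i * w) ≤ n := by
        have : ℓ (s i * w) < ℓ w := hdesc
        omega
      rw [LinearMap.comp_assoc, ih (s i * w) hlen j, ← LinearMap.comp_assoc,
        Lop_Rop_comm cs A q hq i j, LinearMap.comp_assoc]

lemma aw_comm (hq : ∀ i j : B, IsConj (cs.simple i) (cs.simple j) → q i = q j)
    (w : W) (j : B) :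
    (aw cs A q w) ∘ₗ (Rop cs A q j) = (Rop cs A q j) ∘ₗ (aw cs A q w) :=
  aw_comm_aux cs A q hq (ℓ w) w le_rfl j

lemma aw_apply_one_aux (n : ℕ) : ∀ w : W, ℓ w ≤ n →
    aw cs A q w (Finsupp.single 1 1) = Finsupp.single w 1 := by
  induction n with
  | zero =>
    intro w hw
    have : w = 1 := cs.length_eq_zero_iff.mp (Nat.le_zero.mp hw)
    subst this
    rw [aw_one]
    rfl
  | succ n ih =>
    intro w hw
    by_cases h : w = 1
    · subst h; rw [aw_one]; rfl
    · rw [aw_ne_one cs A q w h]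
      set i := Classical.choose (cs.exists_leftDescent_of_ne_one h) with hi
      have hdesc : cs.IsLeftDescent w i := Classical.choose_spec (cs.exists_leftDescent_of_ne_one h)
      have hlt : ℓ (s i * w) < ℓ w := hdesc
      rw [LinearMap.comp_apply, ih (s i * w) (by omega)]
      rw [Lop_single, one_smul, Ts_pos cs A q i (s i * w)
        (by rw [cs.simple_mul_simple_cancel_left]; omega)]
      rw [cs.simple_mul_simple_cancel_left]

lemma aw_apply_one (w : W) :
    aw cs A q w (Finsupp.single 1 1) = Finsupp.single w 1 :=
  aw_apply_one_aux cs A q (ℓ w) w le_rfl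

/-- Injectivity on the commutant : a linear map commuting with all `Rop`s and killing
`e 1` is zero. -/
lemma eq_zero_of_comm_of_apply_one_eq_zero (c : (W →₀ A) →ₗ[A] (W →₀ A))
    (hc : ∀ j : B, c ∘ₗ (Rop cs A q j) = (Rop cs A q j) ∘ₗ c)
    (h1 : c (Finsupp.single 1 1) = 0) : c = 0 := by
  have key : ∀ n : ℕ, ∀ w : W, ℓ w ≤ n → c (Finsupp.single w 1) = 0 := by
    intro n
    induction n with
    | zero =>
      intro w hw
      have : w = 1 := cs.length_eq_zero_iff.mp (Nat.le_zero.mp hw)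
      subst this
      exact h1
    | succ n ih =>
      intro w hw
      by_cases h : w = 1
      · subst h; exact h1
      · obtain ⟨j, hj⟩ := cs.exists_rightDescent_of_ne_one h
        have hlt : ℓ (w * s j) < ℓ w := hj
        have hres : Rop cs A q j (Finsupp.single (w * s j) 1) = Finsupp.single w 1 := by
          rw [Rop_single, one_smul, Us_pos cs A q j (w * s j)
            (by rw [cs.simple_mul_simple_cancel_right]; omega),
            cs.simple_mul_simple_cancel_right]
        rw [← hres]
        have := congrArg (fun f => f (Finsupp.single (w * s j) 1)) (hc j)
        simp only [LinearMap.comp_apply] at this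
        rw [this, ih (w * s j) (by omega), map_zero]
  apply Finsupp.lhom_ext
  intro w b
  have : (Finsupp.single w b : W →₀ A) = b • Finsupp.single w 1 := by
    rw [Finsupp.smul_single, smul_eq_mul, mul_one]
  rw [this, map_smul, key (ℓ w) w le_rfl, smul_zero]
  simp

end aw
section hmul

variable (A : Type*) [CommRing A] (q : B → A)

noncomputable def hmul : (W →₀ A) →ₗ[A] ((W →₀ A) →ₗ[A] (W →₀ A)) :=
  Finsupp.linearCombination A (aw cs A q)

@[simp] lemma hmul_single (w : W) (c : A) :
    hmul cs A q (Finsupp.single w c) = c • aw cs A q w :=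
  Finsupp.linearCombination_single A c w

lemma hmul_one_left : hmul cs A q (Finsupp.single 1 1) = LinearMap.id := by
  rw [hmul_single, one_smul, aw_one]

lemma hmul_one_right (x : W →₀ A) : hmul cs A q x (Finsupp.single 1 1) = x := by
  have : (LinearMap.applyₗ (Finsupp.single (1 : W) (1 : A))) ∘ₗ hmul cs A q = LinearMap.id := by
    apply Finsupp.lhom_ext
    intro w c
    simp only [LinearMap.comp_apply, hmul_single, map_smul, LinearMap.id_apply]
    show c • (aw cs A q w (Finsupp.single 1 1)) = Finsupp.single w c
    rw [aw_apply_one, Finsupp.smul_single, smul_eq_mul, mul_one]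
  have := congrArg (fun f => f x) this
  simpa using this

lemma hmul_comm_Rop (hq : ∀ i j : B, IsConj (cs.simple i) (cs.simple j) → q i = q j)
    (x : W →₀ A) (j : B) :
    (hmul cs A q x) ∘ₗ (Rop cs A q j) = (Rop cs A q j) ∘ₗ (hmul cs A q x) := by
  have : (LinearMap.lcomp A _ (Rop cs A q j)) ∘ₗ hmul cs A q =
      (LinearMap.llcomp A _ _ _ (Rop cs A q j)) ∘ₗ hmul cs A q := by
    apply Finsupp.lhom_ext
    intro w c
    simp only [LinearMap.comp_apply, hmul_single, map_smul]
    simp only [LinearMap.lcomp_apply', LinearMap.llcomp_apply']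
    rw [aw_comm cs A q hq w j]
  have := congrArg (fun f => f x) this
  simpa [LinearMap.lcomp_apply', LinearMap.llcomp_apply'] using this

lemma comm_ext (hq : ∀ i j : B, IsConj (cs.simple i) (cs.simple j) → q i = q j)
    (c d : (W →₀ A) →ₗ[A] (W →₀ A))
    (hc : ∀ j : B, c ∘ₗ (Rop cs A q j) = (Rop cs A q j) ∘ₗ c)
    (hd : ∀ j : B, d ∘ₗ (Rop cs A q j) = (Rop cs A q j) ∘ₗ d)
    (h1 : c (Finsupp.single 1 1) = d (Finsupp.single 1 1)) : c = d := by
  have := eq_zero_of_comm_of_apply_one_eq_zero cs A q (c - d)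
    (fun j => by rw [LinearMap.sub_comp, LinearMap.comp_sub, hc j, hd j])
    (by rw [LinearMap.sub_apply, h1, sub_self])
  exact sub_eq_zero.mp this

lemma hmul_assoc (hq : ∀ i j : B, IsConj (cs.simple i) (cs.simple j) → q i = q j)
    (x y : W →₀ A) :
    hmul cs A q (hmul cs A q x y) = (hmul cs A q x) ∘ₗ (hmul cs A q y) := by
  apply comm_ext cs A q hq
  · exact fun j => hmul_comm_Rop cs A q hq _ j
  · intro j
    rw [LinearMap.comp_assoc, hmul_comm_Rop cs A q hq y j, ← LinearMap.comp_assoc,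
      hmul_comm_Rop cs A q hq x j, LinearMap.comp_assoc]
  · rw [hmul_one_right, LinearMap.comp_apply, hmul_one_right]

lemma hmul_simple (hq : ∀ i j : B, IsConj (cs.simple i) (cs.simple j) → q i = q j) (i : B) :
    hmul cs A q (Finsupp.single (s i) 1) = Lop cs A q i := by
  apply comm_ext cs A q hq
  · exact fun j => hmul_comm_Rop cs A q hq _ j
  · exact fun j => Lop_Rop_comm cs A q hq i j
  · rw [hmul_one_right, Lop_single, one_smul, Ts_pos cs A q i 1
      (by rw [mul_one, cs.length_one, cs.length_simple]; omega), mul_one]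

end hmul

section uniq

variable (A : Type*) [CommRing A] (q : B → A)

lemma mul'_simple (mul' : (W →₀ A) →ₗ[A] (W →₀ A) →ₗ[A] (W →₀ A))
    (h4 : ∀ (i : B) (w : W), cs.length w < cs.length (cs.simple i * w) →
        mul' (Finsupp.single (cs.simple i) 1) (Finsupp.single w 1) =
          Finsupp.single (cs.simple i * w) 1)
    (h5 : ∀ (i : B) (w : W), cs.length (cs.simple i * w) < cs.length w →
        mul' (Finsupp.single (cs.simple i) 1) (Finsupp.single w 1) =
          q i • Finsupp.single (cs.simple i * w) 1 + (q i - 1) • Finsupp.single w 1)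
    (i : B) : mul' (Finsupp.single (s i) 1) = Lop cs A q i := by
  apply Finsupp.lhom_ext
  intro w c
  have hc : (Finsupp.single w c : W →₀ A) = c • Finsupp.single w 1 := by
    rw [Finsupp.smul_single, smul_eq_mul, mul_one]
  rw [hc, map_smul, map_smul, Lop_single, one_smul]
  rcases cs.length_simple_mul w i with h | h
  · rw [h4 i w (by omega), Ts_pos cs A q i w (by omega)]
  · rw [h5 i w (by omega), Ts_neg cs A q i w (by omega)]

lemma mul'_eq_aw (mul' : (W →₀ A) →ₗ[A] (W →₀ A) →ₗ[A] (W →₀ A))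
    (h1 : ∀ x y z : W →₀ A, mul' (mul' x y) z = mul' x (mul' y z))
    (h2 : ∀ x : W →₀ A, mul' (Finsupp.single 1 1) x = x)
    (h4 : ∀ (i : B) (w : W), cs.length w < cs.length (cs.simple i * w) →
        mul' (Finsupp.single (cs.simple i) 1) (Finsupp.single w 1) =
          Finsupp.single (cs.simple i * w) 1)
    (h5 : ∀ (i : B) (w : W), cs.length (cs.simple i * w) < cs.length w →
        mul' (Finsupp.single (cs.simple i) 1) (Finsupp.single w 1) =
          q i • Finsupp.single (cs.simple i * w) 1 + (q i - 1) • Finsupp.single w 1) :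
    ∀ n : ℕ, ∀ w : W, ℓ w ≤ n → mul' (Finsupp.single w 1) = aw cs A q w := by
  intro n
  induction n with
  | zero =>
    intro w hw
    have : w = 1 := cs.length_eq_zero_iff.mp (Nat.le_zero.mp hw)
    subst this
    rw [aw_one]
    exact LinearMap.ext h2
  | succ n ih =>
    intro w hw
    by_cases h : w = 1
    · subst h; rw [aw_one]; exact LinearMap.ext h2
    · rw [aw_ne_one cs A q w h]
      set i := Classical.choose (cs.exists_leftDescent_of_ne_one h) with hi
      have hdesc : cs.IsLeftDescent w i := Classical.choose_spec (cs.exists_leftDescent_of_ne_one h)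
      have hlt : ℓ (s i * w) < ℓ w := hdesc
      have hww : mul' (Finsupp.single (s i) 1) (Finsupp.single (s i * w) 1) =
          Finsupp.single w 1 := by
        rw [h4 i (s i * w) (by rw [cs.simple_mul_simple_cancel_left]; omega),
          cs.simple_mul_simple_cancel_left]
      apply LinearMap.ext
      intro z
      rw [← hww, h1, mul'_simple cs A q mul' h4 h5 i, ih (s i * w) (by omega)]
      rfl

end uniq
end HeckeAux

/-- **Existence and uniqueness of the Hecke algebra multiplication.**
Let `(W, S)` be a Coxeter system (with simple reflections indexed by `B`), `A` a commutative
ring, and `q : S → A` a function constant on conjugacy classes of simple reflections.  Then the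
free `A`-module `W →₀ A` of finitely supported functions `W → A`, with standard basis
`e w = Finsupp.single w 1`, carries a unique associative, unital, `A`-bilinear multiplication
with identity `e 1` satisfying `e s * e w = e (s*w)` if `ℓ(sw) > ℓ(w)` and
`e s * e w = q s • e (s*w) + (q s - 1) • e w` if `ℓ(sw) < ℓ(w)`. -/
theorem hecke_algebra_exists_unique {B : Type*} {W : Type*} [Group W] {M : CoxeterMatrix B}
    (cs : CoxeterSystem M W) (A : Type*) [CommRing A] (q : B → A)
    (hq : ∀ i j : B, IsConj (cs.simple i) (cs.simple j) → q i = q j) :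
    ∃! mul : (W →₀ A) →ₗ[A] (W →₀ A) →ₗ[A] (W →₀ A),
      (∀ x y z : W →₀ A, mul (mul x y) z = mul x (mul y z)) ∧
      (∀ x : W →₀ A, mul (Finsupp.single 1 1) x = x) ∧
      (∀ x : W →₀ A, mul x (Finsupp.single 1 1) = x) ∧
      (∀ (i : B) (w : W), cs.length w < cs.length (cs.simple i * w) →
        mul (Finsupp.single (cs.simple i) 1) (Finsupp.single w 1) =
          Finsupp.single (cs.simple i * w) 1) ∧
      (∀ (i : B) (w : W), cs.length (cs.simple i * w) < cs.length w →
        mul (Finsupp.single (cs.simple i) 1) (Finsupp.single w 1) =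
          q i • Finsupp.single (cs.simple i * w) 1 + (q i - 1) • Finsupp.single w 1) := by
  refine ⟨HeckeAux.hmul cs A q, ⟨?_, ?_, ?_, ?_, ?_⟩, ?_⟩
  · intro x y z
    rw [HeckeAux.hmul_assoc cs A q hq x y]
    rfl
  · intro x
    rw [HeckeAux.hmul_one_left]
    rfl
  · exact HeckeAux.hmul_one_right cs A q
  · intro i w h
    rw [HeckeAux.hmul_simple cs A q hq i, HeckeAux.Lop_single, one_smul,
      HeckeAux.Ts_pos cs A q i w h]
  · intro i w h
    rw [HeckeAux.hmul_simple cs A q hq i, HeckeAux.Lop_single, one_smul,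
      HeckeAux.Ts_neg cs A q i w (by omega)]
  · rintro mul' ⟨h1, h2, h3, h4, h5⟩
    apply Finsupp.lhom_ext
    intro w c
    have hc : (Finsupp.single w c : W →₀ A) = c • Finsupp.single w 1 := by
      rw [Finsupp.smul_single, smul_eq_mul, mul_one]
    rw [hc, map_smul, map_smul,
      HeckeAux.mul'_eq_aw cs A q mul' h1 h2 h4 h5 (cs.length w) w le_rfl,
      HeckeAux.hmul_single, one_smul]
end

section
/- On the Hecke algebra R_q[W], define the inner product ⟨Σ a_w e_w, Σ b_w e_w⟩_q := Σ_w a_w b_w q_w, and let x ↦ x* be the anti-involution with (e_w)* = e_{w⁻¹}. Then for all x, y, z ∈ R_q[W]: (i) ⟨x, y⟩_q = ⟨y*, x*⟩_q, and (ii) ⟨x·y, z⟩_q = ⟨y, x*·z⟩_q. -/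
/-- **The Hecke inner product, the star map and multiplication.**
On the Hecke algebra `R_q[W]` define `⟨Σ a_w e_w, Σ b_w e_w⟩_q := Σ_w a_w b_w q_w`
(where `q_w = q_{s₁} ⋯ q_{s_k}` for a reduced word `s₁ ⋯ s_k` of `w`; we encode this by a
function `Q : W → ℝ` with `Q (π ω) = Π q` over every reduced word `ω`), and let `x ↦ x*`
be the anti-involution determined by `(e w)* = e w⁻¹`.  Then for all `x, y, z`:
(i) `⟨x, y⟩_q = ⟨y*, x*⟩_q`, and (ii) `⟨x·y, z⟩_q = ⟨y, x*·z⟩_q`. -/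
theorem hecke_inner_star_adjoint {B : Type*} {W : Type*} [Group W] {M : CoxeterMatrix B}
    (cs : CoxeterSystem M W) (q : B → ℝ)
    (hq0 : ∀ i : B, 0 < q i)
    (hqconj : ∀ i j : B, IsConj (cs.simple i) (cs.simple j) → q i = q j)
    (Q : W → ℝ)
    (hQ : ∀ ω : List B, cs.IsReduced ω → Q (cs.wordProd ω) = (ω.map q).prod)
    (mul : (W →₀ ℝ) →ₗ[ℝ] (W →₀ ℝ) →ₗ[ℝ] (W →₀ ℝ))
    (hassoc : ∀ x y z : W →₀ ℝ, mul (mul x y) z = mul x (mul y z))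
    (hone : ∀ x : W →₀ ℝ, mul (Finsupp.single 1 1) x = x)
    (hone' : ∀ x : W →₀ ℝ, mul x (Finsupp.single 1 1) = x)
    (hgt : ∀ (i : B) (w : W), cs.length w < cs.length (cs.simple i * w) →
      mul (Finsupp.single (cs.simple i) 1) (Finsupp.single w 1) =
        Finsupp.single (cs.simple i * w) 1)
    (hlt : ∀ (i : B) (w : W), cs.length (cs.simple i * w) < cs.length w →
      mul (Finsupp.single (cs.simple i) 1) (Finsupp.single w 1) =
        q i • Finsupp.single (cs.simple i * w) 1 + (q i - 1) • Finsupp.single w 1)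
    (inner : (W →₀ ℝ) → (W →₀ ℝ) → ℝ)
    (hinner : ∀ x y : W →₀ ℝ, inner x y = x.sum fun w a => a * y w * Q w)
    (star : (W →₀ ℝ) → (W →₀ ℝ))
    (hstar : ∀ x : W →₀ ℝ, star x = Finsupp.mapDomain (fun w : W => w⁻¹) x) :
    (∀ x y : W →₀ ℝ, inner x y = inner (star y) (star x)) ∧
      (∀ x y z : W →₀ ℝ, inner (mul x y) z = inner y (mul (star x) z)) := by
  classical
  -- basic facts about Q
  have hQinv : ∀ w : W, Q w⁻¹ = Q w := by
    intro w
    obtain ⟨ω, hred, rfl⟩ := cs.exists_reduced_word' w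
    rw [← cs.wordProd_reverse, hQ _ ((cs.isReduced_reverse_iff ω).2 hred), hQ ω hred,
      List.map_reverse, List.prod_reverse]
  have hQmul : ∀ (i : B) (w : W), cs.length w < cs.length (cs.simple i * w) →
      Q (cs.simple i * w) = q i * Q w := by
    intro i w hw
    obtain ⟨ω, hlen, rfl⟩ := cs.exists_reduced_word w
    unfold CoxeterSystem.IsReduced at hlen
    have hred : cs.IsReduced ω := hlen
    have h2 : cs.length (cs.simple i * cs.wordProd ω) = ω.length + 1 := by
      have := cs.length_simple_mul (cs.wordProd ω) i
      omega
    have hred2 : cs.IsReduced (i :: ω) := by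
      unfold CoxeterSystem.IsReduced
      rw [cs.wordProd_cons, h2]
      simp
    have := hQ (i :: ω) hred2
    rw [cs.wordProd_cons] at this
    rw [this, List.map_cons, List.prod_cons, hQ ω hred]
  -- basic facts about inner
  have inner_add_left : ∀ x x' y : W →₀ ℝ, inner (x + x') y = inner x y + inner x' y := by
    intro x x' y
    simp only [hinner]
    apply Finsupp.sum_add_index'
    · intro w; ring
    · intro w a b; ring
  have inner_smul_left : ∀ (a : ℝ) (x y : W →₀ ℝ), inner (a • x) y = a * inner x y := by
    intro a x y
    simp only [hinner]
    rw [Finsupp.sum_smul_index (fun w => by ring), Finsupp.mul_sum]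
    apply Finsupp.sum_congr
    intro w _
    ring
  have inner_zero_left : ∀ y : W →₀ ℝ, inner 0 y = 0 := by
    intro y; rw [hinner, Finsupp.sum_zero_index]
  have inner_key : ∀ x y : W →₀ ℝ,
      inner x y = ∑ w ∈ x.support ∪ y.support, x w * y w * Q w := by
    intro x y
    rw [hinner, Finsupp.sum]
    apply Finset.sum_subset Finset.subset_union_left
    intro w _ hw
    rw [Finsupp.notMem_support_iff.mp hw]
    ring
  have inner_symm : ∀ x y : W →₀ ℝ, inner x y = inner y x := by
    intro x y
    rw [inner_key x y, inner_key y x, Finset.union_comm]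
    exact Finset.sum_congr rfl fun w _ => by ring
  have inner_add_right : ∀ x y y' : W →₀ ℝ, inner x (y + y') = inner x y + inner x y' := by
    intro x y y'
    rw [inner_symm, inner_add_left, inner_symm y x, inner_symm y' x]
  have inner_smul_right : ∀ (a : ℝ) (x y : W →₀ ℝ), inner x (a • y) = a * inner x y := by
    intro a x y
    rw [inner_symm, inner_smul_left, inner_symm y x]
  have inner_zero_right : ∀ x : W →₀ ℝ, inner x 0 = 0 := by
    intro x; rw [inner_symm]; exact inner_zero_left x
  have inner_single_left : ∀ (u : W) (y : W →₀ ℝ),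
      inner (Finsupp.single u 1) y = y u * Q u := by
    intro u y
    rw [hinner, Finsupp.sum_single_index (by ring)]
    ring
  have ievv : ∀ u w : W,
      inner (Finsupp.single u (1 : ℝ)) (Finsupp.single w 1) = if u = w then Q u else 0 := by
    intro u w
    rw [inner_single_left, Finsupp.single_apply]
    rcases eq_or_ne u w with rfl | h
    · simp
    · rw [if_neg (fun hh : w = u => h hh.symm), if_neg h]
      ring
  -- length facts
  have hlen_succ : ∀ (i : B) (v : W), cs.length v < cs.length (cs.simple i * v) →
      cs.length (cs.simple i * v) = cs.length v + 1 := by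
    intro i v h
    have := cs.length_simple_mul v i
    omega
  have tri : ∀ (i : B) (v : W),
      cs.length v < cs.length (cs.simple i * v) ∨
      cs.length (cs.simple i * v) < cs.length v := by
    intro i v
    have := cs.length_simple_mul_ne v i
    omega
  have cancel : ∀ (i : B) (v : W), cs.simple i * (cs.simple i * v) = v := by
    intro i v
    exact cs.simple_mul_simple_cancel_left i
  -- the key case analysis on basis vectors
  have adj_e : ∀ (i : B) (v w : W),
      inner (mul (Finsupp.single (cs.simple i) 1) (Finsupp.single v 1)) (Finsupp.single w 1) =
      inner (Finsupp.single v 1)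
        (mul (Finsupp.single (cs.simple i) 1) (Finsupp.single w 1)) := by
    intro i v w
    have hiff : (cs.simple i * w = v) ↔ (cs.simple i * v = w) := by
      constructor
      · rintro rfl; exact cancel i w
      · rintro rfl; exact cancel i v
    have hiff2 : (v = cs.simple i * w) ↔ (cs.simple i * v = w) := by
      rw [eq_comm]; exact hiff
    rcases tri i v with hv | hv <;> rcases tri i w with hw | hw
    · -- both gt
      rw [hgt i v hv, hgt i w hw, ievv, ievv]
      have hc : ¬ (cs.simple i * v = w) := by
        rintro rfl
        rw [cancel] at hw
        rw [hlen_succ i v hv] at hw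
        omega
      rw [if_neg hc, if_neg (fun h => hc (hiff2.1 h))]
    · -- v gt, w lt
      have hvw : v ≠ w := by rintro rfl; omega
      rw [hgt i v hv, hlt i w hw, inner_add_right, inner_smul_right, inner_smul_right,
        ievv, ievv, ievv]
      by_cases hc : cs.simple i * v = w
      · rw [if_pos hc, if_pos (hiff2.2 hc), if_neg hvw, hQmul i v hv]
        ring
      · rw [if_neg hc, if_neg (fun h => hc (hiff2.1 h)), if_neg hvw]
        ring
    · -- v lt, w gt
      have hvw : v ≠ w := by rintro rfl; omega
      rw [hlt i v hv, hgt i w hw, inner_add_left, inner_smul_left, inner_smul_left,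
        ievv, ievv, ievv]
      by_cases hc : cs.simple i * v = w
      · have hqv : Q v = q i * Q w := by rw [hiff2.2 hc]; exact hQmul i w hw
        rw [if_pos hc, if_pos (hiff2.2 hc), if_neg hvw, hc, hqv]
        ring
      · rw [if_neg hc, if_neg (fun h => hc (hiff2.1 h)), if_neg hvw]
        ring
    · -- both lt
      have hc : ¬ (cs.simple i * v = w) := by
        rintro rfl
        rw [cancel] at hw
        omega
      rw [hlt i v hv, hlt i w hw, inner_add_left, inner_smul_left, inner_smul_left,
        inner_add_right, inner_smul_right, inner_smul_right, ievv, ievv, ievv]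
      rw [if_neg hc, if_neg (fun h => hc (hiff2.1 h))]
  -- extend adjointness for simples to all y, z
  have adj_e_z : ∀ (i : B) (v : W) (z : W →₀ ℝ),
      inner (mul (Finsupp.single (cs.simple i) 1) (Finsupp.single v 1)) z =
      inner (Finsupp.single v 1) (mul (Finsupp.single (cs.simple i) 1) z) := by
    intro i v z
    induction z using Finsupp.induction with
    | zero => rw [inner_zero_right, map_zero, inner_zero_right]
    | single_add w b z hwz hb ih =>
      have hb' : Finsupp.single w b = b • Finsupp.single w (1 : ℝ) := by
        rw [Finsupp.smul_single', mul_one]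
      rw [hb', map_add, map_smul, inner_add_right, inner_add_right, inner_smul_right,
        inner_smul_right, ih, adj_e]
  have adj_simple : ∀ (i : B) (y z : W →₀ ℝ),
      inner (mul (Finsupp.single (cs.simple i) 1) y) z =
      inner y (mul (Finsupp.single (cs.simple i) 1) z) := by
    intro i y z
    induction y using Finsupp.induction with
    | zero => rw [map_zero, inner_zero_left, inner_zero_left]
    | single_add v b y hvy hb ih =>
      have hb' : Finsupp.single v b = b • Finsupp.single v (1 : ℝ) := by
        rw [Finsupp.smul_single', mul_one]
      rw [hb', map_add, map_smul, inner_add_left, inner_add_left, inner_smul_left,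
        inner_smul_left, ih, adj_e_z]
  -- products of basis vectors with simples on the right
  have mul_e_simple : ∀ (n : ℕ) (u : W), cs.length u = n → ∀ i : B,
      cs.length u < cs.length (u * cs.simple i) →
      mul (Finsupp.single u 1) (Finsupp.single (cs.simple i) 1) =
        Finsupp.single (u * cs.simple i) 1 := by
    intro n
    induction n with
    | zero =>
      intro u hu i _
      rw [cs.length_eq_zero_iff.mp hu, hone, one_mul]
    | succ n ih =>
      intro u hu i hi
      obtain ⟨ω, hlen, rfl⟩ := cs.exists_reduced_word u
      cases ω with
      | nil => simp [CoxeterSystem.wordProd_nil] at hu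
      | cons j ω' =>
        unfold CoxeterSystem.IsReduced at hlen
        rw [cs.wordProd_cons] at hu hi hlen ⊢
        set u' := cs.wordProd ω' with hu'
        have h1 : cs.length u' ≤ ω'.length := cs.length_wordProd_le ω'
        have h2 : cs.length (cs.simple j * u') ≤ 1 + cs.length u' := by
          have := cs.length_mul_le (cs.simple j) u'
          rwa [cs.length_simple] at this
        simp only [List.length_cons] at hlen
        have hu'len : cs.length u' = n := by omega
        have hju' : cs.length u' < cs.length (cs.simple j * u') := by omega
        have hi2 : cs.length (cs.simple j * u' * cs.simple i) = n + 2 := by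
          have := cs.length_mul_simple (cs.simple j * u') i
          omega
        have h3 : cs.length (u' * cs.simple i) ≤ cs.length u' + 1 := by
          have := cs.length_mul_simple u' i
          omega
        have h4 : cs.length (cs.simple j * (u' * cs.simple i)) ≤
            1 + cs.length (u' * cs.simple i) := by
          have := cs.length_mul_le (cs.simple j) (u' * cs.simple i)
          rwa [cs.length_simple] at this
        have h5 : cs.simple j * (u' * cs.simple i) = cs.simple j * u' * cs.simple i := by
          rw [mul_assoc]
        have hui' : cs.length u' < cs.length (u' * cs.simple i) := by
          rw [h5] at h4
          omega
        have h6 : cs.length (u' * cs.simple i) < cs.length (cs.simple j * (u' * cs.simple i)) := by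
          rw [h5, hi2]
          omega
        rw [← hgt j u' hju', hassoc, ih u' hu'len i hui', hgt j (u' * cs.simple i) h6, h5]
  -- adjointness for all basis vectors
  have adj_u : ∀ (n : ℕ) (u : W), cs.length u = n → ∀ y z : W →₀ ℝ,
      inner (mul (Finsupp.single u 1) y) z =
      inner y (mul (Finsupp.single u⁻¹ 1) z) := by
    intro n
    induction n with
    | zero =>
      intro u hu y z
      rw [cs.length_eq_zero_iff.mp hu, inv_one, hone, hone]
    | succ n ih =>
      intro u hu y z
      obtain ⟨ω, hlen, rfl⟩ := cs.exists_reduced_word u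
      cases ω with
      | nil => simp [CoxeterSystem.wordProd_nil] at hu
      | cons j ω' =>
        unfold CoxeterSystem.IsReduced at hlen
        rw [cs.wordProd_cons] at hu hlen ⊢
        set u' := cs.wordProd ω' with hu'
        have h1 : cs.length u' ≤ ω'.length := cs.length_wordProd_le ω'
        have h2 : cs.length (cs.simple j * u') ≤ 1 + cs.length u' := by
          have := cs.length_mul_le (cs.simple j) u'
          rwa [cs.length_simple] at this
        simp only [List.length_cons] at hlen
        have hu'len : cs.length u' = n := by omega
        have hju' : cs.length u' < cs.length (cs.simple j * u') := by omega
        have hinvlen : cs.length u'⁻¹ < cs.length (u'⁻¹ * cs.simple j) := by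
          have e1 : cs.length (u'⁻¹ * cs.simple j) = cs.length (cs.simple j * u') := by
            rw [← cs.length_inv (u'⁻¹ * cs.simple j)]
            congr 1
            rw [mul_inv_rev, inv_inv, cs.inv_simple]
          rw [e1, cs.length_inv]
          exact hju'
        have hprod : mul (Finsupp.single u'⁻¹ 1) (Finsupp.single (cs.simple j) 1) =
            Finsupp.single (u'⁻¹ * cs.simple j) 1 :=
          mul_e_simple (cs.length u'⁻¹) u'⁻¹ rfl j hinvlen
        have hinv : (cs.simple j * u')⁻¹ = u'⁻¹ * cs.simple j := by
          rw [mul_inv_rev, cs.inv_simple]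
        rw [← hgt j u' hju', hassoc, adj_simple, ih u' hu'len, ← hassoc, hprod, hinv]
  -- star on basis vectors
  have star_single : ∀ u : W, star (Finsupp.single u (1 : ℝ)) = Finsupp.single u⁻¹ 1 := by
    intro u
    rw [hstar, Finsupp.mapDomain_single]
  -- part (i)
  have part1 : ∀ x y : W →₀ ℝ, inner x y = inner (star y) (star x) := by
    intro x y
    rw [hstar, hstar, hinner (Finsupp.mapDomain _ y),
      Finsupp.sum_mapDomain_index_inj (inv_injective : Function.Injective (fun w : W => w⁻¹)),
      inner_symm x y, hinner y x]
    apply Finsupp.sum_congr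
    intro w _
    rw [Finsupp.mapDomain_apply (inv_injective : Function.Injective (fun w : W => w⁻¹)) x w,
      hQinv]
  -- part (ii)
  refine ⟨part1, ?_⟩
  intro x y z
  induction x using Finsupp.induction with
  | zero =>
    rw [hstar]
    simp only [Finsupp.mapDomain_zero, map_zero, LinearMap.zero_apply]
    rw [inner_zero_left, inner_zero_right]
  | single_add u b x hux hb ih =>
    have hb' : Finsupp.single u b = b • Finsupp.single u (1 : ℝ) := by
      rw [Finsupp.smul_single', mul_one]
    have hstar_add : star (Finsupp.single u b + x) =
        b • Finsupp.single u⁻¹ (1 : ℝ) + star x := by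
      rw [hstar, hstar, Finsupp.mapDomain_add, hb', Finsupp.mapDomain_smul,
        Finsupp.mapDomain_single]
    rw [hstar_add, hb', map_add, map_add, map_smul, map_smul, LinearMap.add_apply,
      LinearMap.add_apply, LinearMap.smul_apply, LinearMap.smul_apply, inner_add_left,
      inner_add_right, inner_smul_left, inner_smul_right, ih,
      adj_u (cs.length u) u rfl y z]
end

section
/- Let q : S → ℝ with q_s > 0 and q_s = q_{s'} whenever s and s' are conjugate in W, and let q⁻¹ : S → ℝ be s ↦ q_s⁻¹. The ℝ-linear map j_q : R_q[W] → R_{q⁻¹}[W] determined on basis elements by j_q(e_w) := (−1)^{ℓ(w)} q_w e_w is an ℝ-algebra isomorphism, and its inverse is the analogously defined map j_{q⁻¹} : R_{q⁻¹}[W] → R_q[W]. -/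
/-- **The `j`-isomorphism of Hecke algebras.**
Let `q : S → ℝ` be positive and constant on conjugacy classes, with `q⁻¹ : s ↦ (q s)⁻¹`.
Let `mul` be the Hecke multiplication for `q` and `mul'` the Hecke multiplication for `q⁻¹`
on `W →₀ ℝ`.  Then the `ℝ`-linear map `j = j_q` determined on basis elements by
`j (e w) = (-1)^{ℓ w} q_w • e w` is an `ℝ`-algebra isomorphism `R_q[W] ≅ R_{q⁻¹}[W]`:
it sends `1` to `1`, it is multiplicative, and the analogously defined map
`j' = j_{q⁻¹}` (with `j' (e w) = (-1)^{ℓ w} (q_w)⁻¹ • e w`) is its two-sided inverse. -/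
theorem hecke_j_isomorphism {B : Type*} {W : Type*} [Group W] {M : CoxeterMatrix B}
    (cs : CoxeterSystem M W) (q : B → ℝ)
    (hq0 : ∀ i : B, 0 < q i)
    (hqconj : ∀ i j : B, IsConj (cs.simple i) (cs.simple j) → q i = q j)
    (Q : W → ℝ)
    (hQ : ∀ ω : List B, cs.IsReduced ω → Q (cs.wordProd ω) = (ω.map q).prod)
    -- the Hecke multiplication for the multiparameter `q`
    (mul : (W →₀ ℝ) →ₗ[ℝ] (W →₀ ℝ) →ₗ[ℝ] (W →₀ ℝ))
    (hassoc : ∀ x y z : W →₀ ℝ, mul (mul x y) z = mul x (mul y z))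
    (hone : ∀ x : W →₀ ℝ, mul (Finsupp.single 1 1) x = x)
    (hone' : ∀ x : W →₀ ℝ, mul x (Finsupp.single 1 1) = x)
    (hgt : ∀ (i : B) (w : W), cs.length w < cs.length (cs.simple i * w) →
      mul (Finsupp.single (cs.simple i) 1) (Finsupp.single w 1) =
        Finsupp.single (cs.simple i * w) 1)
    (hlt : ∀ (i : B) (w : W), cs.length (cs.simple i * w) < cs.length w →
      mul (Finsupp.single (cs.simple i) 1) (Finsupp.single w 1) =
        q i • Finsupp.single (cs.simple i * w) 1 + (q i - 1) • Finsupp.single w 1)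
    -- the Hecke multiplication for the multiparameter `q⁻¹`
    (mul' : (W →₀ ℝ) →ₗ[ℝ] (W →₀ ℝ) →ₗ[ℝ] (W →₀ ℝ))
    (hassoc' : ∀ x y z : W →₀ ℝ, mul' (mul' x y) z = mul' x (mul' y z))
    (h'one : ∀ x : W →₀ ℝ, mul' (Finsupp.single 1 1) x = x)
    (h'one' : ∀ x : W →₀ ℝ, mul' x (Finsupp.single 1 1) = x)
    (hgt' : ∀ (i : B) (w : W), cs.length w < cs.length (cs.simple i * w) →
      mul' (Finsupp.single (cs.simple i) 1) (Finsupp.single w 1) =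
        Finsupp.single (cs.simple i * w) 1)
    (hlt' : ∀ (i : B) (w : W), cs.length (cs.simple i * w) < cs.length w →
      mul' (Finsupp.single (cs.simple i) 1) (Finsupp.single w 1) =
        (q i)⁻¹ • Finsupp.single (cs.simple i * w) 1 +
          ((q i)⁻¹ - 1) • Finsupp.single w 1)
    -- the maps `j_q` and `j_{q⁻¹}`, given as linear maps by their values on basis elements
    (j j' : (W →₀ ℝ) →ₗ[ℝ] (W →₀ ℝ))
    (hj : ∀ w : W, j (Finsupp.single w 1) =
      ((-1 : ℝ) ^ cs.length w * Q w) • Finsupp.single w 1)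
    (hj' : ∀ w : W, j' (Finsupp.single w 1) =
      ((-1 : ℝ) ^ cs.length w * (Q w)⁻¹) • Finsupp.single w 1) :
    j (Finsupp.single 1 1) = Finsupp.single 1 1 ∧
      (∀ x y : W →₀ ℝ, j (mul x y) = mul' (j x) (j y)) ∧
      (∀ x : W →₀ ℝ, j' (j x) = x) ∧
      (∀ x : W →₀ ℝ, j (j' x) = x) := by
    -- Basic facts about `Q`
  have hs2 : ∀ (i : B) (w : W), cs.simple i * (cs.simple i * w) = w := by
    intro i w
    rw [← mul_assoc, cs.simple_mul_simple_self, one_mul]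
  have hQ1 : Q 1 = 1 := by
    have h := hQ [] (by simp [CoxeterSystem.IsReduced])
    simpa using h
  have hQpos : ∀ w : W, 0 < Q w := by
    intro w
    obtain ⟨ω, hred, rfl⟩ := cs.exists_reduced_word' w
    rw [hQ ω hred]
    apply List.prod_pos
    intro x hx
    obtain ⟨i, _, rfl⟩ := List.mem_map.mp hx
    exact hq0 i
  have hQmul : ∀ (i : B) (w : W), cs.length w < cs.length (cs.simple i * w) →
      Q (cs.simple i * w) = q i * Q w := by
    intro i w hlen
    obtain ⟨ω, hred, rfl⟩ := cs.exists_reduced_word' w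
    have hlen' : cs.length (cs.simple i * cs.wordProd ω) = cs.length (cs.wordProd ω) + 1 :=
      (cs.length_simple_mul (cs.wordProd ω) i).resolve_right (by omega)
    have hred' : cs.IsReduced (i :: ω) := by
      unfold CoxeterSystem.IsReduced at *
      rw [cs.wordProd_cons, hlen', hred, List.length_cons]
    have h := hQ (i :: ω) hred'
    rw [cs.wordProd_cons] at h
    rw [h, List.map_cons, List.prod_cons, ← hQ ω hred]
  have hsgn : ∀ (i : B) (w : W), cs.length w < cs.length (cs.simple i * w) →
      ((-1 : ℝ)) ^ cs.length (cs.simple i * w) = -(-1 : ℝ) ^ cs.length w := by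
    intro i w hlen
    have hlen' : cs.length (cs.simple i * w) = cs.length w + 1 :=
      (cs.length_simple_mul w i).resolve_right (by omega)
    rw [hlen', pow_succ]
    ring
  have hj1 : j (Finsupp.single 1 1) = Finsupp.single 1 1 := by
    rw [hj 1, cs.length_one, hQ1]
    simp
  have hj'1 : j' (Finsupp.single 1 1) = Finsupp.single 1 1 := by
    rw [hj' 1, cs.length_one, hQ1]
    simp
  -- multiplicativity for a simple generator and a basis element
  have key1 : ∀ (i : B) (w : W),
      j (mul (Finsupp.single (cs.simple i) 1) (Finsupp.single w 1)) =
      mul' (j (Finsupp.single (cs.simple i) 1)) (j (Finsupp.single w 1)) := by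
    intro i w
    have hQs : Q (cs.simple i) = q i := by
      have h := hQmul i 1 (by rw [mul_one, cs.length_one, cs.length_simple]; omega)
      rwa [mul_one, hQ1, mul_one] at h
    have hqne : q i ≠ 0 := ne_of_gt (hq0 i)
    rcases cs.length_simple_mul w i with hcase | hcase
    · -- ℓ(s w) = ℓ w + 1
      have hlen : cs.length w < cs.length (cs.simple i * w) := by omega
      rw [hgt i w hlen, hj, hj, hj]
      simp only [map_smul, LinearMap.smul_apply, smul_smul]
      rw [hgt' i w hlen, hQmul i w hlen, hsgn i w hlen, cs.length_simple, hQs]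
      congr 1
      ring
    · -- ℓ(s w) + 1 = ℓ w
      have hlen : cs.length (cs.simple i * w) < cs.length w := by omega
      have hlen2 : cs.length (cs.simple i * w) <
          cs.length (cs.simple i * (cs.simple i * w)) := by rw [hs2]; omega
      have hQw : Q w = q i * Q (cs.simple i * w) := by
        have h := hQmul i (cs.simple i * w) hlen2
        rwa [hs2] at h
      have hsg : ((-1 : ℝ)) ^ cs.length w = -(-1 : ℝ) ^ cs.length (cs.simple i * w) := by
        have h := hsgn i (cs.simple i * w) hlen2
        rwa [hs2] at h
      rw [hlt i w hlen, hj (cs.simple i), hj w]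
      simp only [map_add, map_smul, hj, LinearMap.smul_apply, smul_smul]
      rw [hlt' i w hlen]
      simp only [smul_add, smul_smul]
      rw [cs.length_simple, hQs, hQw, hsg]
      congr 1
      · congr 1
        field_simp [hqne]
      · congr 1
        field_simp [hqne]
        ring
  -- multiplicativity for a simple generator and anything
  have key2 : ∀ (i : B) (y : W →₀ ℝ),
      j (mul (Finsupp.single (cs.simple i) 1) y) =
      mul' (j (Finsupp.single (cs.simple i) 1)) (j y) := by
    intro i y
    induction y using Finsupp.induction_linear with
    | zero => simp only [map_zero, LinearMap.zero_apply, map_zero]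
    | add f g hf hg => simp only [map_add, hf, hg]
    | single w b =>
      have hb : (Finsupp.single w b : W →₀ ℝ) = b • Finsupp.single w 1 := by
        rw [Finsupp.smul_single, smul_eq_mul, mul_one]
      rw [hb, map_smul, map_smul, map_smul, map_smul, key1]
  -- multiplicativity for any basis element and anything
  have key3 : ∀ (n : ℕ) (v : W), cs.length v = n → ∀ y : W →₀ ℝ,
      j (mul (Finsupp.single v 1) y) = mul' (j (Finsupp.single v 1)) (j y) := by
    intro n
    induction n using Nat.strong_induction_on with
    | _ n ih =>
      intro v hv y
      rcases eq_or_ne v 1 with rfl | hne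
      · rw [hone, hj1, h'one]
      · obtain ⟨i, hd⟩ := cs.exists_leftDescent_of_ne_one hne
        set v' := cs.simple i * v with hv'def
        have hvv : cs.simple i * v' = v := by rw [hv'def, hs2]
        have hlenv' : cs.length v' < cs.length (cs.simple i * v') := by
          rw [hvv]; exact hd
        have hev : Finsupp.single v (1 : ℝ) =
            mul (Finsupp.single (cs.simple i) 1) (Finsupp.single v' 1) := by
          rw [hgt i v' hlenv', hvv]
        have hlt' : cs.length v' < n := by rw [← hv]; exact hd
        rw [hev, hassoc, key2, ih (cs.length v') hlt' v' rfl y, ← hassoc', ← key2, ← hev]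
  refine ⟨hj1, ?_, ?_, ?_⟩
  · -- multiplicativity
    intro x y
    induction x using Finsupp.induction_linear with
    | zero => simp only [map_zero, LinearMap.zero_apply, map_zero]
    | add f g hf hg => simp only [map_add, LinearMap.add_apply, hf, hg]
    | single v b =>
      have hb : (Finsupp.single v b : W →₀ ℝ) = b • Finsupp.single v 1 := by
        rw [Finsupp.smul_single, smul_eq_mul, mul_one]
      simp only [hb, map_smul, LinearMap.smul_apply]
      rw [key3 (cs.length v) v rfl y]
  · -- j' ∘ j = id
    intro x
    induction x using Finsupp.induction_linear with
    | zero => simp only [map_zero, LinearMap.zero_apply, map_zero]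
    | add f g hf hg => simp only [map_add, hf, hg]
    | single w b =>
      have hb : (Finsupp.single w b : W →₀ ℝ) = b • Finsupp.single w 1 := by
        rw [Finsupp.smul_single, smul_eq_mul, mul_one]
      have hne : Q w ≠ 0 := ne_of_gt (hQpos w)
      have h2 : ((-1 : ℝ)) ^ cs.length w * (-1 : ℝ) ^ cs.length w = 1 := by
        rw [← pow_add]; exact Even.neg_one_pow ⟨cs.length w, rfl⟩
      rw [hb, map_smul, map_smul, hj, map_smul, hj']
      simp only [smul_smul]
      congr 1
      linear_combination (b * Q w * (Q w)⁻¹) * h2 + b * mul_inv_cancel₀ hne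
  · -- j ∘ j' = id
    intro x
    induction x using Finsupp.induction_linear with
    | zero => simp only [map_zero, LinearMap.zero_apply, map_zero]
    | add f g hf hg => simp only [map_add, hf, hg]
    | single w b =>
      have hb : (Finsupp.single w b : W →₀ ℝ) = b • Finsupp.single w 1 := by
        rw [Finsupp.smul_single, smul_eq_mul, mul_one]
      have hne : Q w ≠ 0 := ne_of_gt (hQpos w)
      have h2 : ((-1 : ℝ)) ^ cs.length w * (-1 : ℝ) ^ cs.length w = 1 := by
        rw [← pow_add]; exact Even.neg_one_pow ⟨cs.length w, rfl⟩
      rw [hb, map_smul, map_smul, hj', map_smul, hj]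
      simp only [smul_smul]
      congr 1
      linear_combination (b * Q w * (Q w)⁻¹) * h2 + b * mul_inv_cancel₀ hne
end

section
/- Let U, V ⊆ S be spherical subsets with U ∩ V ≠ ∅. Then in the Hecke algebra R_q[W], with h̃_U := Σ_{w∈W_U} (−1)^{ℓ(w)} q_w⁻¹ e_w and ã_V := Σ_{w∈W_V} e_w, one has h̃_U · ã_V = 0. -/
/-- Right multiplication rule (ascending case), derived from the left rules. -/
theorem hecke_aux_rmul {B : Type*} {W : Type*} [Group W] {M : CoxeterMatrix B}
    (cs : CoxeterSystem M W)
    (mul : (W →₀ ℝ) →ₗ[ℝ] (W →₀ ℝ) →ₗ[ℝ] (W →₀ ℝ))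
    (hassoc : ∀ x y z : W →₀ ℝ, mul (mul x y) z = mul x (mul y z))
    (hone : ∀ x : W →₀ ℝ, mul (Finsupp.single 1 1) x = x)
    (hgt : ∀ (i : B) (w : W), cs.length w < cs.length (cs.simple i * w) →
      mul (Finsupp.single (cs.simple i) 1) (Finsupp.single w 1) =
        Finsupp.single (cs.simple i * w) 1) :
    ∀ (n : ℕ) (w : W), cs.length w = n → ∀ i : B, cs.length w < cs.length (w * cs.simple i) →
      mul (Finsupp.single w 1) (Finsupp.single (cs.simple i) 1) =
        Finsupp.single (w * cs.simple i) 1 := by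
  intro n
  induction n using Nat.strong_induction_on with
  | _ n ih =>
    intro w hw i hup
    obtain ⟨ω, hlen, rfl⟩ := cs.exists_reduced_word w
    match ω with
    | [] =>
      simp only [cs.wordProd_nil, one_mul]
      exact hone _
    | j :: ω' =>
      rw [cs.wordProd_cons] at hup hw ⊢
      set w' := cs.wordProd ω' with hw'
      have hred : cs.IsReduced (j :: ω') := by
        unfold CoxeterSystem.IsReduced at hlen ⊢
        omega
      have hred' : cs.IsReduced ω' := by
        have := hred.drop 1
        simpa using this
      have hlw' : cs.length w' = ω'.length := hred'
      have hlw : cs.length (cs.simple j * w') = ω'.length + 1 := by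
        have := hred
        unfold CoxeterSystem.IsReduced at this
        rw [cs.wordProd_cons] at this
        simpa using this
      have hup' : cs.length (cs.simple j * w' * cs.simple i) = ω'.length + 2 := by
        rcases cs.length_mul_simple (cs.simple j * w') i with h | h
        · omega
        · omega
      have hwsi_le : cs.length (w' * cs.simple i) ≤ ω'.length + 1 := by
        have := cs.length_mul_le w' (cs.simple i)
        simpa [hlw', cs.length_simple] using this
      have hwsi_ge : ω'.length + 1 ≤ cs.length (w' * cs.simple i) := by
        have h2 := cs.length_mul_le (cs.simple j) (w' * cs.simple i)
        rw [← mul_assoc] at h2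
        simp only [cs.length_simple] at h2
        omega
      have hwsi : cs.length (w' * cs.simple i) = ω'.length + 1 := le_antisymm hwsi_le hwsi_ge
      have e1 : mul (Finsupp.single (cs.simple j) 1) (Finsupp.single w' 1) =
          Finsupp.single (cs.simple j * w') 1 := hgt j w' (by omega)
      have e2 : mul (Finsupp.single w' 1) (Finsupp.single (cs.simple i) 1) =
          Finsupp.single (w' * cs.simple i) 1 := by
        apply ih ω'.length (by omega) w' hlw' i (by omega)
      have e3 : mul (Finsupp.single (cs.simple j) 1) (Finsupp.single (w' * cs.simple i) 1) =
          Finsupp.single (cs.simple j * (w' * cs.simple i)) 1 := by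
        apply hgt
        rw [← mul_assoc]
        omega
      calc mul (Finsupp.single (cs.simple j * w') 1) (Finsupp.single (cs.simple i) 1)
          = mul (mul (Finsupp.single (cs.simple j) 1) (Finsupp.single w' 1))
              (Finsupp.single (cs.simple i) 1) := by rw [e1]
        _ = mul (Finsupp.single (cs.simple j) 1)
              (mul (Finsupp.single w' 1) (Finsupp.single (cs.simple i) 1)) := hassoc _ _ _
        _ = Finsupp.single (cs.simple j * w' * cs.simple i) 1 := by
              rw [e2, e3, mul_assoc]

theorem hecke_aux_Q_pos {B : Type*} {W : Type*} [Group W] {M : CoxeterMatrix B}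
    (cs : CoxeterSystem M W) (q : B → ℝ) (hq0 : ∀ i : B, 0 < q i)
    (Q : W → ℝ) (hQ : ∀ ω : List B, cs.IsReduced ω → Q (cs.wordProd ω) = (ω.map q).prod)
    (w : W) : 0 < Q w := by
  obtain ⟨ω, hlen, rfl⟩ := cs.exists_reduced_word w
  rw [hQ ω (by unfold CoxeterSystem.IsReduced at hlen ⊢; omega)]
  apply List.prod_pos
  intro x hx
  obtain ⟨b, _, rfl⟩ := List.mem_map.mp hx
  exact hq0 b

theorem hecke_aux_Q_mul {B : Type*} {W : Type*} [Group W] {M : CoxeterMatrix B}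
    (cs : CoxeterSystem M W) (q : B → ℝ)
    (Q : W → ℝ) (hQ : ∀ ω : List B, cs.IsReduced ω → Q (cs.wordProd ω) = (ω.map q).prod)
    (w : W) (i : B) (hup : cs.length (w * cs.simple i) = cs.length w + 1) :
    Q (w * cs.simple i) = Q w * q i := by
  obtain ⟨ω, hlen, rfl⟩ := cs.exists_reduced_word w
  have hr : cs.IsReduced ω := by unfold CoxeterSystem.IsReduced at hlen ⊢; omega
  have hπ : cs.wordProd (ω ++ [i]) = cs.wordProd ω * cs.simple i := by
    rw [cs.wordProd_append, cs.wordProd_singleton]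
  have hr2 : cs.IsReduced (ω ++ [i]) := by
    unfold CoxeterSystem.IsReduced at hlen ⊢
    rw [hπ]
    simp only [List.length_append, List.length_singleton]
    omega
  have h2 := hQ (ω ++ [i]) hr2
  rw [hπ] at h2
  rw [h2, hQ ω hr]
  simp

/-- **`h̃_U · ã_V = 0` when `U ∩ V ≠ ∅`.**
Let `U, V ⊆ S` be spherical subsets with `U ∩ V ≠ ∅`.  Then in the Hecke algebra `R_q[W]`,
with `h̃_U = Σ_{w ∈ W_U} (-1)^{ℓ w} q_w⁻¹ e_w` and `ã_V = Σ_{w ∈ W_V} e_w`, one has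
`h̃_U · ã_V = 0`. -/
theorem hecke_hTilde_mul_aTilde_eq_zero {B : Type*} {W : Type*} [Group W] {M : CoxeterMatrix B}
    (cs : CoxeterSystem M W) (q : B → ℝ)
    (hq0 : ∀ i : B, 0 < q i)
    (hqconj : ∀ i j : B, IsConj (cs.simple i) (cs.simple j) → q i = q j)
    (Q : W → ℝ)
    (hQ : ∀ ω : List B, cs.IsReduced ω → Q (cs.wordProd ω) = (ω.map q).prod)
    (mul : (W →₀ ℝ) →ₗ[ℝ] (W →₀ ℝ) →ₗ[ℝ] (W →₀ ℝ))
    (hassoc : ∀ x y z : W →₀ ℝ, mul (mul x y) z = mul x (mul y z))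
    (hone : ∀ x : W →₀ ℝ, mul (Finsupp.single 1 1) x = x)
    (hone' : ∀ x : W →₀ ℝ, mul x (Finsupp.single 1 1) = x)
    (hgt : ∀ (i : B) (w : W), cs.length w < cs.length (cs.simple i * w) →
      mul (Finsupp.single (cs.simple i) 1) (Finsupp.single w 1) =
        Finsupp.single (cs.simple i * w) 1)
    (hlt : ∀ (i : B) (w : W), cs.length (cs.simple i * w) < cs.length w →
      mul (Finsupp.single (cs.simple i) 1) (Finsupp.single w 1) =
        q i • Finsupp.single (cs.simple i * w) 1 + (q i - 1) • Finsupp.single w 1)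
    (U V : Set B)
    (hUV : (U ∩ V).Nonempty)
    (hfinU : ((Subgroup.closure (cs.simple '' U) : Subgroup W) : Set W).Finite)
    (hfinV : ((Subgroup.closure (cs.simple '' V) : Subgroup W) : Set W).Finite) :
    mul (∑ w ∈ hfinU.toFinset, Finsupp.single w ((-1 : ℝ) ^ cs.length w * (Q w)⁻¹))
        (∑ w ∈ hfinV.toFinset, Finsupp.single w (1 : ℝ)) = 0 := by
  classical
  obtain ⟨i, hiU, hiV⟩ := hUV
  set s := cs.simple i with hs
  have hsU : s ∈ Subgroup.closure (cs.simple '' U) :=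
    Subgroup.subset_closure ⟨i, hiU, rfl⟩
  have hsV : s ∈ Subgroup.closure (cs.simple '' V) :=
    Subgroup.subset_closure ⟨i, hiV, rfl⟩
  set aV := ∑ w ∈ hfinV.toFinset, Finsupp.single w (1 : ℝ) with haV
  -- absorption: e_s · ã_V = q_i • ã_V
  have absorb : mul (Finsupp.single s 1) aV = q i • aV := by
    have h2 : ∑ w ∈ hfinV.toFinset,
        (mul (Finsupp.single s 1) (Finsupp.single w 1) - q i • Finsupp.single w (1 : ℝ)) = 0 := by
      apply Finset.sum_involution (fun w _ => s * w)
      · intro w hw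
        rcases Nat.lt_or_gt_of_ne (cs.length_simple_mul_ne w i) with hdn | hup
        · -- descending: ℓ(s w) < ℓ w
          have e1 := hlt i w hdn
          have e2 : mul (Finsupp.single s 1) (Finsupp.single (s * w) 1) =
              Finsupp.single (s * (s * w)) 1 := by
            apply hgt
            rw [hs, cs.simple_mul_simple_cancel_left]
            exact hdn
          rw [hs, cs.simple_mul_simple_cancel_left] at e2
          rw [e1, e2]
          module
        · -- ascending: ℓ w < ℓ(s w)
          have e1 := hgt i w hup
          have e2 : mul (Finsupp.single s 1) (Finsupp.single (s * w) 1) =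
              q i • Finsupp.single (s * (s * w)) 1 + (q i - 1) • Finsupp.single (s * w) 1 := by
            apply hlt
            rw [hs, cs.simple_mul_simple_cancel_left]
            exact hup
          rw [hs, cs.simple_mul_simple_cancel_left] at e2
          rw [e1, e2]
          module
      · intro w hw _
        intro hcon
        exact cs.length_simple_mul_ne w i (by rw [← hs, hcon])
      · intro w hw
        rw [Set.Finite.mem_toFinset] at hw ⊢
        exact Subgroup.mul_mem _ hsV hw
      · intro w hw
        rw [hs]
        exact cs.simple_mul_simple_cancel_left i
    rw [Finset.sum_sub_distrib, sub_eq_zero] at h2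
    rw [haV, map_sum, h2, Finset.smul_sum]
  -- main computation
  have key : ∀ w : W, w ∈ (Subgroup.closure (cs.simple '' U) : Subgroup W) →
      cs.length w < cs.length (w * s) →
      ((-1 : ℝ) ^ cs.length w * (Q w)⁻¹) • mul (Finsupp.single w 1) aV +
        ((-1 : ℝ) ^ cs.length (w * s) * (Q (w * s))⁻¹) • mul (Finsupp.single (w * s) 1) aV
        = 0 := by
    intro w _ hup
    have hlen : cs.length (w * s) = cs.length w + 1 := by
      rcases cs.length_mul_simple w i with h | h
      · exact h
      · rw [← hs] at h; omega
    have hQmul : Q (w * s) = Q w * q i := hecke_aux_Q_mul cs q Q hQ w i hlen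
    have hQpos : 0 < Q w := hecke_aux_Q_pos cs q hq0 Q hQ w
    have hrm := hecke_aux_rmul cs mul hassoc hone hgt (cs.length w) w rfl i hup
    have habs : mul (Finsupp.single (w * s) 1) aV = q i • mul (Finsupp.single w 1) aV := by
      rw [← hrm, hassoc, absorb, map_smul]
    rw [habs, smul_smul, hlen, hQmul]
    have hc : (-1 : ℝ) ^ (cs.length w + 1) * (Q w * q i)⁻¹ * q i =
        -((-1 : ℝ) ^ cs.length w * (Q w)⁻¹) := by
      have hqne : q i ≠ 0 := ne_of_gt (hq0 i)
      have hQne : Q w ≠ 0 := ne_of_gt hQpos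
      field_simp
      ring
    rw [hc, neg_smul, add_neg_cancel]
  rw [map_sum mul (fun w => Finsupp.single w ((-1 : ℝ) ^ cs.length w * (Q w)⁻¹)) hfinU.toFinset,
    LinearMap.sum_apply]
  have hterm : ∀ w : W,
      (mul (Finsupp.single w ((-1 : ℝ) ^ cs.length w * (Q w)⁻¹))) aV =
        ((-1 : ℝ) ^ cs.length w * (Q w)⁻¹) • mul (Finsupp.single w 1) aV := by
    intro w
    have h1 : Finsupp.single w ((-1 : ℝ) ^ cs.length w * (Q w)⁻¹)
        = ((-1 : ℝ) ^ cs.length w * (Q w)⁻¹) • Finsupp.single w (1 : ℝ) := by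
      rw [Finsupp.smul_single', mul_one]
    rw [h1, map_smul, LinearMap.smul_apply]
  simp only [hterm]
  apply Finset.sum_involution (fun w _ => w * s)
  · intro w hw
    rcases Nat.lt_or_gt_of_ne (cs.length_mul_simple_ne w i) with hdn | hup
    · -- descending: apply key to w * s
      have hmem : w * s ∈ (Subgroup.closure (cs.simple '' U) : Subgroup W) := by
        rw [Set.Finite.mem_toFinset] at hw
        exact Subgroup.mul_mem _ hw hsU
      have h := key (w * s) hmem (by rw [hs, cs.simple_mul_simple_cancel_right]; exact hdn)
      rw [hs, cs.simple_mul_simple_cancel_right] at h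
      rw [add_comm]
      exact h
    · exact key w (by rwa [Set.Finite.mem_toFinset] at hw) hup
  · intro w hw _
    intro hcon
    exact cs.length_mul_simple_ne w i (by rw [← hs, hcon])
  · intro w hw
    rw [Set.Finite.mem_toFinset] at hw ⊢
    exact Subgroup.mul_mem _ hw hsU
  · intro w hw
    rw [hs]
    exact cs.simple_mul_simple_cancel_right i
end

section
/- Let T ⊆ U ⊆ S with U spherical, and let X_T := {w ∈ W : ℓ(wt) > ℓ(w) for all t ∈ T} be the set of (∅,T)-reduced elements. Then in the Hecke algebra R_q[W], with h̃_V := Σ_{w∈W_V} (−1)^{ℓ(w)} q_w⁻¹ e_w for spherical V, one has h̃_U = (Σ_{v ∈ W_U ∩ X_T} (−1)^{ℓ(v)} q_v⁻¹ e_v) · h̃_T. -/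
namespace HeckeFactorAux

open CoxeterSystem List

variable {B : Type*} {W : Type*} [Group W] {M : CoxeterMatrix B} (cs : CoxeterSystem M W)

lemma yxy (i j : B) (k : ℕ) :
    cs.simple j * (cs.simple i * cs.simple j) ^ k * cs.simple j
      = ((cs.simple i * cs.simple j) ^ k)⁻¹ := by
  have h : MulAut.conj (cs.simple j) (cs.simple i * cs.simple j)
      = (cs.simple i * cs.simple j)⁻¹ := by
    simp only [MulAut.conj_apply, cs.inv_simple, mul_inv_rev]
    simp [mul_assoc, cs.simple_mul_simple_self, cs.inv_simple]
  have h2 := map_pow (MulAut.conj (cs.simple j)) (cs.simple i * cs.simple j) k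
  rw [h, inv_pow] at h2
  simpa only [MulAut.conj_apply, cs.inv_simple] using h2

lemma prod_alt_add (i j : B) (n : ℕ) :
    cs.wordProd (alternatingWord i j (M i j + n)) =
      cs.wordProd (alternatingWord i j (M i j)) * cs.wordProd (alternatingWord i j n) := by
  have hx : (cs.simple i * cs.simple j) ^ (M i j) = 1 := cs.simple_mul_simple_pow i j
  set x := cs.simple i * cs.simple j with hxdef
  set y := cs.simple j with hydef
  have hyy : y * y = 1 := cs.simple_mul_simple_self j
  have hyx : ∀ k : ℕ, y * x ^ k = (x ^ k)⁻¹ * y := by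
    intro k
    have h1 := yxy cs i j k
    rw [← hxdef, ← hydef] at h1
    calc y * x ^ k = (y * x ^ k * y) * y := by rw [mul_assoc, hyy, mul_one]
      _ = (x ^ k)⁻¹ * y := by rw [h1]
  set m := M i j with hmdef
  rw [cs.prod_alternatingWord_eq_mul_pow, cs.prod_alternatingWord_eq_mul_pow,
    cs.prod_alternatingWord_eq_mul_pow, ← hxdef, ← hydef]
  rcases Nat.even_or_odd m with hm | hm <;> rcases Nat.even_or_odd n with hn | hn
  · have hme : m % 2 = 0 := Nat.even_iff.mp hm
    have hne : n % 2 = 0 := Nat.even_iff.mp hn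
    rw [if_pos (hm.add hn), if_pos hm, if_pos hn,
      (by omega : (m + n) / 2 = m / 2 + n / 2), pow_add, one_mul, one_mul, one_mul]
  · have hme : m % 2 = 0 := Nat.even_iff.mp hm
    have hne : n % 2 = 1 := Nat.odd_iff.mp hn
    have hmn : ¬ Even (m + n) := by rw [Nat.even_iff]; omega
    rw [if_neg hmn, if_pos hm, if_neg (Nat.not_even_iff_odd.mpr hn), one_mul]
    have hinv : (x ^ (m / 2))⁻¹ = x ^ (m / 2) := by
      have h0 : x ^ (m / 2) * x ^ (m / 2) = 1 := by
        rw [← pow_add, (by omega : m / 2 + m / 2 = m), hx]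
      rw [inv_eq_of_mul_eq_one_right h0]
    calc y * x ^ ((m + n) / 2)
        = y * x ^ (m / 2) * x ^ (n / 2) := by
          rw [(by omega : (m + n) / 2 = m / 2 + n / 2), pow_add, mul_assoc]
      _ = (x ^ (m / 2))⁻¹ * y * x ^ (n / 2) := by rw [hyx]
      _ = x ^ (m / 2) * (y * x ^ (n / 2)) := by rw [hinv, mul_assoc]
  · have hme : m % 2 = 1 := Nat.odd_iff.mp hm
    have hne : n % 2 = 0 := Nat.even_iff.mp hn
    have hmn : ¬ Even (m + n) := by rw [Nat.even_iff]; omega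
    rw [if_neg hmn, if_neg (Nat.not_even_iff_odd.mpr hm), if_pos hn, one_mul,
      (by omega : (m + n) / 2 = m / 2 + n / 2), pow_add, mul_assoc]
  · have hme : m % 2 = 1 := Nat.odd_iff.mp hm
    have hne : n % 2 = 1 := Nat.odd_iff.mp hn
    have hmn : Even (m + n) := by rw [Nat.even_iff]; omega
    rw [if_pos hmn, if_neg (Nat.not_even_iff_odd.mpr hm), if_neg (Nat.not_even_iff_odd.mpr hn),
      one_mul]
    have key : x ^ (m / 2) * x ^ ((m + n) / 2) = x ^ (n / 2) := by
      rw [← pow_add, (by omega : m / 2 + (m + n) / 2 = m + n / 2), pow_add, hx, one_mul]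
    calc x ^ ((m + n) / 2)
        = (x ^ (m / 2))⁻¹ * x ^ (n / 2) := by rw [eq_inv_mul_iff_mul_eq]; exact key
      _ = (x ^ (m / 2))⁻¹ * y * (y * x ^ (n / 2)) := by
          rw [mul_assoc, ← mul_assoc y y, hyy, one_mul]
      _ = y * x ^ (m / 2) * (y * x ^ (n / 2)) := by rw [hyx (m / 2)]

end HeckeFactorAux

namespace HeckeFactorAux
open CoxeterSystem List
open scoped Classical

variable {B : Type*} {W : Type*} [Group W] {M : CoxeterMatrix B} (cs : CoxeterSystem M W)

noncomputable def sigmaFun (i : B) : W × ℤˣ → W × ℤˣ :=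
  fun p => (cs.simple i * p.1 * cs.simple i, if p.1 = cs.simple i then -p.2 else p.2)

lemma sigmaFun_invol (i : B) : Function.Involutive (sigmaFun cs i) := by
  intro p
  simp only [sigmaFun]
  have hcond : cs.simple i * p.1 * cs.simple i = cs.simple i ↔ p.1 = cs.simple i := by
    constructor
    · intro h
      have h2 : cs.simple i * (cs.simple i * p.1 * cs.simple i) * cs.simple i
          = cs.simple i * cs.simple i * cs.simple i := by rw [h]
      simpa [mul_assoc, cs.simple_mul_simple_self, cs.simple_mul_simple_cancel_left] using h2
    · intro h; rw [h]; rw [cs.simple_mul_simple_self, one_mul]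
  by_cases h : p.1 = cs.simple i
  · simp only [hcond, if_pos h]
    refine Prod.ext ?_ (by simp)
    simp [h, cs.simple_mul_simple_self, mul_assoc]
  · simp only [hcond, if_neg h]
    refine Prod.ext ?_ rfl
    simp [mul_assoc, cs.simple_mul_simple_self, cs.simple_mul_simple_cancel_left]

noncomputable def sigma (i : B) : Equiv.Perm (W × ℤˣ) := (sigmaFun_invol cs i).toPerm

lemma sigma_apply (i : B) (p : W × ℤˣ) : sigma cs i p = sigmaFun cs i p := rfl

lemma prod_sigma_apply (ω : List B) (t : W) (ε : ℤˣ) :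
    (ω.map (sigma cs)).prod ⟨t, ε⟩ =
      ⟨cs.wordProd ω * t * (cs.wordProd ω)⁻¹,
        (-1 : ℤˣ) ^ ((cs.rightInvSeq ω).count t) * ε⟩ := by
  induction ω with
  | nil => simp [CoxeterSystem.rightInvSeq]
  | cons i ω ih =>
    rw [List.map_cons, List.prod_cons, Equiv.Perm.mul_apply, ih, sigma_apply, sigmaFun]
    have hward : cs.rightInvSeq (i :: ω) =
        ((cs.wordProd ω)⁻¹ * cs.simple i * cs.wordProd ω) :: cs.rightInvSeq ω := rfl
    have hcond : cs.wordProd ω * t * (cs.wordProd ω)⁻¹ = cs.simple i ↔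
        t = (cs.wordProd ω)⁻¹ * cs.simple i * cs.wordProd ω := by
      constructor
      · intro h; rw [← h]; group
      · intro h; rw [h]; group
    refine Prod.ext ?_ ?_
    · simp only [cs.wordProd_cons, mul_inv_rev, cs.inv_simple]
      group
    · simp only [hward, List.count_cons]
      by_cases h : t = (cs.wordProd ω)⁻¹ * cs.simple i * cs.wordProd ω
      · rw [if_pos (hcond.mpr h)]
        have hb : ((cs.wordProd ω)⁻¹ * cs.simple i * cs.wordProd ω == t) = true :=
          beq_iff_eq.mpr h.symm
        rw [hb, if_pos rfl, pow_succ, mul_assoc, neg_one_mul, mul_neg]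
      · rw [if_neg (fun hc => h (hcond.mp hc))]
        have hb : ((cs.wordProd ω)⁻¹ * cs.simple i * cs.wordProd ω == t) = false :=
          beq_eq_false_iff_ne.mpr (fun hc => h hc.symm)
        rw [hb, if_neg (by simp), add_zero]

lemma map_sigma_alt_prod (i j : B) (k : ℕ) :
    ((alternatingWord i j (2 * k)).map (sigma cs)).prod = (sigma cs i * sigma cs j) ^ k := by
  induction k with
  | zero => simp [alternatingWord]
  | succ k ih =>
    have h2 : 2 * (k + 1) = (2 * k + 1) + 1 := by ring
    rw [h2, alternatingWord_succ', alternatingWord_succ']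
    rw [if_neg (by simp [Nat.even_iff, Nat.add_mod] : ¬ Even (2 * k + 1)),
      if_pos (by simp : Even (2 * k))]
    rw [List.map_cons, List.map_cons, List.prod_cons, List.prod_cons, ih, ← mul_assoc,
      pow_succ']

lemma ris_alternating (i j : B) (k : ℕ) :
    cs.rightInvSeq (alternatingWord i j k) =
      ((List.range k).reverse).map
        (fun n => (cs.wordProd (alternatingWord i j n))⁻¹ *
          cs.wordProd (alternatingWord i j (n + 1))) := by
  induction k with
  | zero => simp [alternatingWord]
  | succ k ih =>
    rw [alternatingWord_succ']
    have hris : ∀ (c : B) (l : List B), cs.rightInvSeq (c :: l) =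
        ((cs.wordProd l)⁻¹ * cs.simple c * cs.wordProd l) :: cs.rightInvSeq l := fun _ _ => rfl
    rw [hris, ih, List.range_succ, List.reverse_append, List.reverse_singleton,
      List.singleton_append, List.map_cons]
    congr 1
    rw [alternatingWord_succ']
    rw [cs.wordProd_cons]
    group

lemma z_periodic (i j : B) (n : ℕ) :
    (cs.wordProd (alternatingWord i j (M i j + n)))⁻¹ *
        cs.wordProd (alternatingWord i j (M i j + n + 1)) =
      (cs.wordProd (alternatingWord i j n))⁻¹ * cs.wordProd (alternatingWord i j (n + 1)) := by
  have h1 := prod_alt_add cs i j n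
  have h2 := prod_alt_add cs i j (n + 1)
  rw [(by ring : M i j + n + 1 = M i j + (n + 1)), h1, h2]
  group

lemma count_ris_alt_even (i j : B) (t : W) :
    Even ((cs.rightInvSeq (alternatingWord i j (2 * M i j))).count t) := by
  rw [ris_alternating]
  set z : ℕ → W := fun n => (cs.wordProd (alternatingWord i j n))⁻¹ *
    cs.wordProd (alternatingWord i j (n + 1)) with hz
  have key : ∀ x, z (M i j + x) = z x := fun x => z_periodic cs i j x
  rw [List.map_reverse, List.count_reverse, List.count_eq_countP, List.countP_map,
    (by ring : 2 * M i j = M i j + M i j), List.range_add, List.countP_append, List.countP_map]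
  have hc : List.countP (((fun x => x == t) ∘ z) ∘ (fun x => M i j + x)) (List.range (M i j))
      = List.countP ((fun x => x == t) ∘ z) (List.range (M i j)) := by
    apply List.countP_congr
    intro x _
    simp only [Function.comp_apply, key x]
  rw [hc]
  exact ⟨_, rfl⟩

end HeckeFactorAux

namespace HeckeFactorAux
open CoxeterSystem List
open scoped Classical

variable {B : Type*} {W : Type*} [Group W] {M : CoxeterMatrix B} (cs : CoxeterSystem M W)

lemma isLiftable_sigma : M.IsLiftable (sigma cs) := by
  intro i j
  rw [← map_sigma_alt_prod cs i j (M i j)]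
  ext ⟨t, ε⟩
  · rw [prod_sigma_apply]
    have hprod : cs.wordProd (alternatingWord i j (2 * M i j)) = 1 := by
      rw [cs.prod_alternatingWord_eq_mul_pow, if_pos (by simp : Even (2 * M i j)),
        (by omega : 2 * M i j / 2 = M i j), cs.simple_mul_simple_pow, one_mul]
    rw [hprod]
    simp
  · rw [prod_sigma_apply]
    have := count_ris_alt_even cs i j t
    simp only [Equiv.Perm.one_apply]
    rw [Even.neg_one_pow this, one_mul]

noncomputable def permRep : W →* Equiv.Perm (W × ℤˣ) :=
  cs.lift ⟨sigma cs, isLiftable_sigma cs⟩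

lemma permRep_wordProd (ω : List B) (t : W) (ε : ℤˣ) :
    permRep cs (cs.wordProd ω) ⟨t, ε⟩ =
      ⟨cs.wordProd ω * t * (cs.wordProd ω)⁻¹,
        (-1 : ℤˣ) ^ ((cs.rightInvSeq ω).count t) * ε⟩ := by
  have h1 : permRep cs (cs.wordProd ω) = (ω.map (sigma cs)).prod := by
    rw [CoxeterSystem.wordProd, map_list_prod, List.map_map]
    congr 1
    apply List.map_congr_left
    intro b _
    exact cs.lift_apply_simple (isLiftable_sigma cs) b
  rw [h1, prod_sigma_apply]

lemma count_parity_eq {ω ω' : List B} (h : cs.wordProd ω = cs.wordProd ω') (t : W) :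
    (Even ((cs.rightInvSeq ω).count t) ↔ Even ((cs.rightInvSeq ω').count t)) := by
  have h1 := permRep_wordProd cs ω t 1
  have h2 := permRep_wordProd cs ω' t 1
  rw [h] at h1
  rw [h1] at h2
  have h3 := congrArg Prod.snd h2
  simp only [mul_one] at h3
  constructor
  · intro he
    by_contra ho
    rw [Even.neg_one_pow he, Odd.neg_one_pow (Nat.not_even_iff_odd.mp ho)] at h3
    exact (by decide : ¬ ((1 : ℤˣ) = -1)) h3
  · intro he
    by_contra ho
    rw [Even.neg_one_pow he, Odd.neg_one_pow (Nat.not_even_iff_odd.mp ho)] at h3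
    exact (by decide : ¬ ((-1 : ℤˣ) = 1)) h3

lemma exchange_simple {ω : List B} {j : B}
    (h : cs.length (cs.wordProd ω * cs.simple j) < cs.length (cs.wordProd ω)) :
    ∃ r, r < ω.length ∧ cs.wordProd ω * cs.simple j = cs.wordProd (ω.eraseIdx r) := by
  obtain ⟨α, hαred, hα⟩ := cs.exists_reduced_word' (cs.wordProd ω * cs.simple j)
  have heven : Even ((cs.rightInvSeq α).count (cs.simple j)) := by
    by_contra ho
    have hpos : 0 < (cs.rightInvSeq α).count (cs.simple j) := by
      rcases Nat.not_even_iff_odd.mp ho with ⟨k, hk⟩; omega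
    have hmem := List.count_pos_iff.mp hpos
    have hinv := cs.isRightInversion_of_mem_rightInvSeq hαred hmem
    have h2 := hinv.2
    rw [← hα, cs.simple_mul_simple_cancel_right] at h2
    omega
  have hconcat : cs.wordProd (ω.concat j) = cs.wordProd α := by
    rw [cs.wordProd_concat, ← hα]
  have heven2 : Even ((cs.rightInvSeq (ω.concat j)).count (cs.simple j)) :=
    (count_parity_eq cs hconcat (cs.simple j)).mpr heven
  rw [cs.rightInvSeq_concat] at heven2
  have hcount : (((cs.rightInvSeq ω).map (MulAut.conj (cs.simple j))).concat
      (cs.simple j)).count (cs.simple j)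
      = (cs.rightInvSeq ω).count (cs.simple j) + 1 := by
    rw [List.concat_eq_append, List.count_append, List.count_singleton_self]
    congr 1
    have hmap := List.count_map_of_injective (cs.rightInvSeq ω)
      (⇑(MulAut.conj (cs.simple j))) (MulAut.conj (cs.simple j)).injective (cs.simple j)
    have hfix : (MulAut.conj (cs.simple j)) (cs.simple j) = cs.simple j := by
      simp [MulAut.conj_apply]
    rw [hfix] at hmap
    exact hmap
  rw [hcount] at heven2
  have hodd : Odd ((cs.rightInvSeq ω).count (cs.simple j)) := by
    rcases heven2 with ⟨k, hk⟩
    exact ⟨k - 1, by omega⟩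
  have hpos : 0 < (cs.rightInvSeq ω).count (cs.simple j) := by
    rcases hodd with ⟨k, hk⟩; omega
  have hmem := List.count_pos_iff.mp hpos
  obtain ⟨r, hr, hrs⟩ := List.mem_iff_getElem.mp hmem
  rw [cs.length_rightInvSeq] at hr
  refine ⟨r, hr, ?_⟩
  have := cs.wordProd_mul_getD_rightInvSeq ω r
  rw [List.getD_eq_getElem _ _ (by rw [cs.length_rightInvSeq]; exact hr), hrs] at this
  exact this

end HeckeFactorAux

namespace HeckeFactorAux
open CoxeterSystem List
open scoped Classical

variable {B : Type*} {W : Type*} [Group W] {M : CoxeterMatrix B} (cs : CoxeterSystem M W)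

lemma wordProd_mem_closure {V : Set B} {ω : List B} (hω : ∀ b ∈ ω, b ∈ V) :
    cs.wordProd ω ∈ Subgroup.closure (cs.simple '' V) := by
  induction ω with
  | nil => rw [cs.wordProd_nil]; exact Subgroup.one_mem _
  | cons i ω ih =>
    rw [cs.wordProd_cons]
    exact mul_mem (Subgroup.subset_closure ⟨i, hω i (by simp), rfl⟩)
      (ih (fun b hb => hω b (by simp [hb])))

lemma exists_word_over {V : Set B} {w : W} (hw : w ∈ Subgroup.closure (cs.simple '' V)) :
    ∃ ω : List B, (∀ b ∈ ω, b ∈ V) ∧ w = cs.wordProd ω := by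
  induction hw using Subgroup.closure_induction with
  | mem x hx =>
    obtain ⟨i, hi, rfl⟩ := hx
    exact ⟨[i], by simpa using hi, by simp⟩
  | one => exact ⟨[], by simp, by simp⟩
  | mul x y hx hy ihx ihy =>
    obtain ⟨ω₁, h1, rfl⟩ := ihx
    obtain ⟨ω₂, h2, rfl⟩ := ihy
    exact ⟨ω₁ ++ ω₂, by
      intro b hb
      rcases List.mem_append.mp hb with h | h
      exacts [h1 b h, h2 b h], (cs.wordProd_append ω₁ ω₂).symm⟩
  | inv x hx ihx =>
    obtain ⟨ω, h1, rfl⟩ := ihx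
    exact ⟨ω.reverse, fun b hb => h1 b (List.mem_reverse.mp hb),
      (cs.wordProd_reverse ω).symm⟩

lemma exists_reduced_word_over_aux (V : Set B) :
    ∀ n (ω : List B), ω.length ≤ n → (∀ b ∈ ω, b ∈ V) →
      ∃ ω' : List B, (∀ b ∈ ω', b ∈ V) ∧ cs.IsReduced ω' ∧ cs.wordProd ω' = cs.wordProd ω := by
  intro n
  induction n with
  | zero =>
    intro ω hlen _
    have : ω = [] := List.length_eq_zero_iff.mp (Nat.le_zero.mp hlen)
    subst this
    exact ⟨[], by simp, by simp [CoxeterSystem.IsReduced], rfl⟩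
  | succ n ih =>
    intro ω hlen hmem
    by_cases hred : cs.IsReduced ω
    · exact ⟨ω, hmem, hred, rfl⟩
    · -- find minimal j with take (j+1) not reduced
      have hlen0 : ω ≠ [] := by
        rintro rfl
        exact hred (by simp [CoxeterSystem.IsReduced])
      have hωpos : 0 < ω.length := List.length_pos_iff.mpr hlen0
      have hwit : ¬ cs.IsReduced (ω.take (ω.length - 1 + 1)) := by
        rwa [(by omega : ω.length - 1 + 1 = ω.length), List.take_length]
      have hexists : ∃ j, ¬ cs.IsReduced (ω.take (j + 1)) := ⟨ω.length - 1, hwit⟩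
      set j := Nat.find hexists with hjdef
      have hj : ¬ cs.IsReduced (ω.take (j + 1)) := Nat.find_spec hexists
      have hjlt : j < ω.length := by
        have h1 : j ≤ ω.length - 1 := Nat.find_le hwit
        omega
      have hjred : cs.IsReduced (ω.take j) := by
        rcases Nat.eq_zero_or_pos j with h0 | h0
        · rw [h0]; simp [CoxeterSystem.IsReduced]
        · have := Nat.find_min hexists (m := j - 1) (by omega)
          rw [(by omega : j - 1 + 1 = j)] at this
          exact not_not.mp this
      set c := ω[j] with hc
      have htake : ω.take (j + 1) = ω.take j ++ [c] := by
        rw [← List.take_concat_get hjlt, List.concat_eq_append]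
      have hlentake : (ω.take j).length = j := by
        rw [List.length_take]; omega
      have hlu : cs.length (cs.wordProd (ω.take j)) = j := by
        have h0 := hjred
        unfold CoxeterSystem.IsReduced at h0
        rw [h0, hlentake]
      have hshort : cs.length (cs.wordProd (ω.take j) * cs.simple c) <
          cs.length (cs.wordProd (ω.take j)) := by
        have h1 : cs.wordProd (ω.take (j + 1)) = cs.wordProd (ω.take j) * cs.simple c := by
          rw [htake, cs.wordProd_append, cs.wordProd_singleton]
        have h2 : cs.length (cs.wordProd (ω.take (j + 1))) ≠ (ω.take (j+1)).length := hj
        have h3 : cs.length (cs.wordProd (ω.take (j + 1))) ≤ (ω.take (j+1)).length :=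
          cs.length_wordProd_le _
        have h4 : (ω.take (j+1)).length = j + 1 := by rw [List.length_take]; omega
        have h5 := cs.length_mul_simple_ne (cs.wordProd (ω.take j)) c
        rw [h1] at h2 h3
        rw [h4] at h2 h3
        omega
      obtain ⟨r, hr, hre⟩ := exchange_simple cs hshort
      set ω' := (ω.take j).eraseIdx r ++ ω.drop (j + 1) with hω'
      have hmem' : ∀ b ∈ ω', b ∈ V := by
        intro b hb
        rcases List.mem_append.mp hb with h | h
        · exact hmem b (List.take_subset _ _ (List.eraseIdx_subset h))
        · exact hmem b (List.drop_subset _ _ h)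
      have hprod : cs.wordProd ω' = cs.wordProd ω := by
        rw [hω', cs.wordProd_append, ← hre]
        have h1 : cs.wordProd (ω.take j) * cs.simple c = cs.wordProd (ω.take (j + 1)) := by
          rw [htake, cs.wordProd_append, cs.wordProd_singleton]
        rw [h1, ← cs.wordProd_append, List.take_append_drop]
      have hlen' : ω'.length ≤ n := by
        rw [hω', List.length_append, List.length_eraseIdx_of_lt (by rw [hlentake]; omega),
          List.length_drop, hlentake]
        omega
      obtain ⟨ω'', a, b, c'⟩ := ih ω' hlen' hmem'
      exact ⟨ω'', a, b, by rw [c', hprod]⟩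

lemma exists_reduced_word_over {V : Set B} {w : W}
    (hw : w ∈ Subgroup.closure (cs.simple '' V)) :
    ∃ ω : List B, (∀ b ∈ ω, b ∈ V) ∧ cs.IsReduced ω ∧ w = cs.wordProd ω := by
  obtain ⟨ω, hmem, rfl⟩ := exists_word_over cs hw
  obtain ⟨ω', h1, h2, h3⟩ := exists_reduced_word_over_aux cs V ω.length ω le_rfl hmem
  exact ⟨ω', h1, h2, h3.symm⟩

end HeckeFactorAux

namespace HeckeFactorAux
open CoxeterSystem List
open scoped Classical

variable {B : Type*} {W : Type*} [Group W] {M : CoxeterMatrix B} (cs : CoxeterSystem M W)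

lemma reduced_word_length {ω : List B} (h : cs.IsReduced ω) :
    cs.length (cs.wordProd ω) = ω.length := h

lemma min_rep_lenAdd (T : Set B) (w : W)
    (hmin : ∀ u ∈ Subgroup.closure (cs.simple '' T), cs.length w ≤ cs.length (w * u)) :
    ∀ t ∈ Subgroup.closure (cs.simple '' T),
      cs.length (w * t) = cs.length w + cs.length t := by
  have main : ∀ n, ∀ t ∈ Subgroup.closure (cs.simple '' T), cs.length t = n →
      cs.length (w * t) = cs.length w + cs.length t := by
    intro n
    induction n using Nat.strong_induction_on with
    | _ n ih =>
    intro t ht hltn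
    by_cases h1 : t = 1
    · subst h1; simp
    · obtain ⟨τ, hτT, hτred, rfl⟩ := exists_reduced_word_over cs ht
      have hτne : τ ≠ [] := by
        rintro rfl
        exact h1 (by simp)
      set jl := τ.getLast hτne with hjl
      set τ' := τ.dropLast with hτ'
      have hτeq : τ' ++ [jl] = τ := List.dropLast_append_getLast hτne
      have hτ'red : cs.IsReduced τ' := by
        rw [hτ', List.dropLast_eq_take]
        exact hτred.take _
      have hτ'len : τ'.length = τ.length - 1 := by
        rw [hτ', List.length_dropLast]
      have hτpos : 0 < τ.length := List.length_pos_iff.mpr hτne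
      have hjlT : jl ∈ T := hτT jl (List.getLast_mem hτne)
      have ht'mem : cs.wordProd τ' ∈ Subgroup.closure (cs.simple '' T) :=
        wordProd_mem_closure cs (fun b hb => hτT b (List.dropLast_subset τ hb))
      have hteq : cs.wordProd τ = cs.wordProd τ' * cs.simple jl := by
        rw [← hτeq, cs.wordProd_append, cs.wordProd_singleton]
      have hlt : cs.length (cs.wordProd τ) = τ.length := hτred
      have hlt' : cs.length (cs.wordProd τ') = τ.length - 1 := by
        rw [reduced_word_length cs hτ'red, hτ'len]
      have hIH : cs.length (w * cs.wordProd τ') =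
          cs.length w + cs.length (cs.wordProd τ') := by
        refine ih (cs.length (cs.wordProd τ')) ?_ _ ht'mem rfl
        omega
      rcases cs.length_mul_simple (w * cs.wordProd τ') jl with hup | hdown
      · -- length goes up: done
        rw [hteq, ← mul_assoc, hup, hIH, ← hteq, hlt, hlt']
        omega
      · -- length goes down: contradiction
        exfalso
        obtain ⟨ωv, hωvlen, hωveq⟩ := cs.exists_reduced_word w
        replace hωvlen : ωv.length = cs.length w := by rw [hωveq]; exact hωvlen.eq.symm
        have hprodv : cs.wordProd (ωv ++ τ') = w * cs.wordProd τ' := by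
          rw [cs.wordProd_append, ← hωveq]
        have hshort : cs.length (cs.wordProd (ωv ++ τ') * cs.simple jl) <
            cs.length (cs.wordProd (ωv ++ τ')) := by
          rw [hprodv]
          omega
        obtain ⟨r, hr, hre⟩ := exchange_simple cs hshort
        rw [hprodv] at hre
        rw [List.length_append, hωvlen] at hr
        by_cases hcase : r < ωv.length
        · rw [List.eraseIdx_append_of_lt_length hcase] at hre
          have h9 := hre
          rw [cs.wordProd_append] at h9
          have hu : w * (cs.wordProd τ' * cs.simple jl * (cs.wordProd τ')⁻¹) =
              cs.wordProd (ωv.eraseIdx r) := by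
            have h10 : cs.wordProd (ωv.eraseIdx r) =
                w * cs.wordProd τ' * cs.simple jl * (cs.wordProd τ')⁻¹ := by
              rw [h9]; group
            rw [h10]; group
          have humem : cs.wordProd τ' * cs.simple jl * (cs.wordProd τ')⁻¹ ∈
              Subgroup.closure (cs.simple '' T) :=
            mul_mem (mul_mem ht'mem (Subgroup.subset_closure ⟨jl, hjlT, rfl⟩))
              (inv_mem ht'mem)
          have hm := hmin _ humem
          rw [hu] at hm
          have hle := cs.length_wordProd_le (ωv.eraseIdx r)
          rw [List.length_eraseIdx_of_lt hcase] at hle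
          rw [hωvlen] at hle
          have hωvpos : 0 < cs.length w := by omega
          omega
        · push_neg at hcase
          rw [List.eraseIdx_append_of_length_le hcase] at hre
          rw [cs.wordProd_append] at hre
          have hcancel : cs.wordProd τ' * cs.simple jl =
              cs.wordProd (τ'.eraseIdx (r - ωv.length)) := by
            have h11 := hre
            rw [mul_assoc, ← hωveq] at h11
            exact mul_left_cancel h11
          have hle := cs.length_wordProd_le (τ'.eraseIdx (r - ωv.length))
          rw [← hcancel] at hle
          have hlenerase : (τ'.eraseIdx (r - ωv.length)).length = τ'.length - 1 := by
            rw [List.length_eraseIdx_of_lt]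
            rw [hωvlen] at hcase
            omega
          rw [← hteq] at hle
          rw [hlenerase, hlt] at hle
          omega
  intro t ht
  exact main (cs.length t) t ht rfl

lemma noDescent_lenAdd (T : Set B)
    (hfinT : ((Subgroup.closure (cs.simple '' T) : Subgroup W) : Set W).Finite)
    (v : W) (hv : ∀ j ∈ T, cs.length v < cs.length (v * cs.simple j)) :
    ∀ t ∈ Subgroup.closure (cs.simple '' T),
      cs.length (v * t) = cs.length v + cs.length t := by
  have hne : (hfinT.toFinset).Nonempty :=
    ⟨1, by rw [Set.Finite.mem_toFinset]; exact Subgroup.one_mem _⟩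
  obtain ⟨u₀, hu₀F, hu₀min⟩ :=
    Finset.exists_min_image hfinT.toFinset (fun u => cs.length (v * u)) hne
  have hu₀mem : u₀ ∈ Subgroup.closure (cs.simple '' T) :=
    (Set.Finite.mem_toFinset hfinT).mp hu₀F
  have hmin : ∀ u ∈ Subgroup.closure (cs.simple '' T),
      cs.length (v * u₀) ≤ cs.length (v * u₀ * u) := by
    intro u hu
    have : v * u₀ * u = v * (u₀ * u) := by group
    rw [this]
    exact hu₀min (u₀ * u) ((Set.Finite.mem_toFinset hfinT).mpr (mul_mem hu₀mem hu))
  have hlenAdd := min_rep_lenAdd cs T (v * u₀) hmin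
  -- show u₀ = 1
  have hu₀1 : u₀ = 1 := by
    by_contra hne1
    have hinvne : u₀⁻¹ ≠ 1 := by simpa using hne1
    obtain ⟨τ, hτT, hτred, hτeq⟩ := exists_reduced_word_over cs (inv_mem hu₀mem)
    have hτne : τ ≠ [] := by
      rintro rfl
      exact hinvne (by rw [hτeq]; simp)
    set jl := τ.getLast hτne with hjl
    set τ' := τ.dropLast with hτ'
    have hτcat : τ' ++ [jl] = τ := List.dropLast_append_getLast hτne
    have hτ'red : cs.IsReduced τ' := by
      rw [hτ', List.dropLast_eq_take]
      exact hτred.take _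
    have hjlT : jl ∈ T := hτT jl (List.getLast_mem hτne)
    have ht'mem : cs.wordProd τ' ∈ Subgroup.closure (cs.simple '' T) :=
      wordProd_mem_closure cs (fun b hb => hτT b (List.dropLast_subset τ hb))
    have hlv : cs.length v = cs.length (v * u₀) + cs.length u₀⁻¹ := by
      have h := hlenAdd u₀⁻¹ (inv_mem hu₀mem)
      rw [mul_assoc, mul_inv_cancel, mul_one] at h
      exact h
    have hvs : v * cs.simple jl = v * u₀ * (cs.wordProd τ') := by
      have h3 : u₀⁻¹ = cs.wordProd τ' * cs.simple jl := by
        rw [hτeq, ← hτcat, cs.wordProd_append, cs.wordProd_singleton]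
      have h4 : u₀ * cs.wordProd τ' = cs.simple jl := by
        have h5 : u₀ = (cs.wordProd τ' * cs.simple jl)⁻¹ := by rw [← h3, inv_inv]
        rw [h5, mul_inv_rev, cs.inv_simple, mul_assoc, inv_mul_cancel, mul_one]
      rw [mul_assoc, h4]
    have hlvs : cs.length (v * cs.simple jl) =
        cs.length (v * u₀) + cs.length (cs.wordProd τ') := by
      rw [hvs]
      exact hlenAdd _ ht'mem
    have hlτ' : cs.length (cs.wordProd τ') = τ.length - 1 := by
      rw [reduced_word_length cs hτ'red, hτ', List.length_dropLast]
    have hlτ : cs.length u₀⁻¹ = τ.length := by rw [hτeq]; exact hτred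
    have hτpos : 0 < τ.length := List.length_pos_iff.mpr hτne
    have := hv jl hjlT
    omega
  rw [hu₀1, mul_one] at hlenAdd
  exact hlenAdd

end HeckeFactorAux

namespace HeckeFactorAux
open CoxeterSystem List
open scoped Classical

variable {B : Type*} {W : Type*} [Group W] {M : CoxeterMatrix B} (cs : CoxeterSystem M W)

lemma hecke_single_mul
    (mul : (W →₀ ℝ) →ₗ[ℝ] (W →₀ ℝ) →ₗ[ℝ] (W →₀ ℝ))
    (hassoc : ∀ x y z : W →₀ ℝ, mul (mul x y) z = mul x (mul y z))
    (hone : ∀ x : W →₀ ℝ, mul (Finsupp.single 1 1) x = x)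
    (hgt : ∀ (i : B) (w : W), cs.length w < cs.length (cs.simple i * w) →
      mul (Finsupp.single (cs.simple i) 1) (Finsupp.single w 1) =
        Finsupp.single (cs.simple i * w) 1) :
    ∀ n (v t : W), cs.length v = n → cs.length (v * t) = cs.length v + cs.length t →
      mul (Finsupp.single v 1) (Finsupp.single t 1) = Finsupp.single (v * t) 1 := by
  intro n
  induction n using Nat.strong_induction_on with
  | _ n ih =>
  intro v t hn hlen
  rcases Nat.eq_zero_or_pos n with h0 | h0
  · have hv1 : v = 1 := cs.length_eq_zero_iff.mp (by omega)
    subst hv1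
    rw [hone, one_mul]
  · obtain ⟨ω, hωlen, hωeq⟩ := cs.exists_reduced_word v
    replace hωlen : ω.length = cs.length v := by rw [hωeq]; exact hωlen.eq.symm
    have hωne : ω ≠ [] := by
      rintro rfl
      simp only [List.length_nil] at hωlen
      omega
    obtain ⟨i, ω', rfl⟩ := List.exists_cons_of_ne_nil hωne
    set v' := cs.wordProd ω' with hv'
    have h1 : v = cs.simple i * v' := by rw [hωeq, cs.wordProd_cons]
    have hred : cs.IsReduced (i :: ω') := by
      unfold CoxeterSystem.IsReduced
      rw [← hωeq, ← hωlen]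
    have hω'red : cs.IsReduced ω' := by
      have := CoxeterSystem.IsReduced.drop (j := 1) hred
      simpa using this
    have hlv' : cs.length v' = n - 1 := by
      have h2 : cs.length v' = ω'.length := hω'red
      simp only [List.length_cons] at hωlen
      omega
    have hv't : cs.length (v' * t) = cs.length v' + cs.length t := by
      have hub := cs.length_mul_le v' t
      have hvt : v * t = cs.simple i * (v' * t) := by rw [h1]; group
      rcases cs.length_simple_mul (v' * t) i with hA | hA
      · rw [← hvt] at hA
        omega
      · rw [← hvt] at hA
        omega
    have hIH := ih (n - 1) (by omega) v' t (by omega) hv't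
    have hcond1 : cs.length v' < cs.length (cs.simple i * v') := by
      rw [← h1]
      omega
    have hcond2 : cs.length (v' * t) < cs.length (cs.simple i * (v' * t)) := by
      have hvt : cs.simple i * (v' * t) = v * t := by rw [h1]; group
      rw [hvt, hlen]
      omega
    have e1 : mul (Finsupp.single (cs.simple i) 1) (Finsupp.single v' 1) =
        Finsupp.single v 1 := by
      rw [hgt i v' hcond1, ← h1]
    calc mul (Finsupp.single v 1) (Finsupp.single t 1)
        = mul (mul (Finsupp.single (cs.simple i) 1) (Finsupp.single v' 1))
            (Finsupp.single t 1) := by rw [e1]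
      _ = mul (Finsupp.single (cs.simple i) 1)
            (mul (Finsupp.single v' 1) (Finsupp.single t 1)) := hassoc _ _ _
      _ = mul (Finsupp.single (cs.simple i) 1) (Finsupp.single (v' * t) 1) := by rw [hIH]
      _ = Finsupp.single (cs.simple i * (v' * t)) 1 := hgt i (v' * t) hcond2
      _ = Finsupp.single (v * t) 1 := by rw [h1, mul_assoc]

lemma Q_mul (q : B → ℝ) (Q : W → ℝ)
    (hQ : ∀ ω : List B, cs.IsReduced ω → Q (cs.wordProd ω) = (ω.map q).prod)
    {v t : W} (hlen : cs.length (v * t) = cs.length v + cs.length t) :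
    Q (v * t) = Q v * Q t := by
  obtain ⟨ωv, hωvlen, hωveq⟩ := cs.exists_reduced_word v
  obtain ⟨ωt, hωtlen, hωteq⟩ := cs.exists_reduced_word t
  replace hωvlen : ωv.length = cs.length v := by rw [hωveq]; exact hωvlen.eq.symm
  replace hωtlen : ωt.length = cs.length t := by rw [hωteq]; exact hωtlen.eq.symm
  have hvred : cs.IsReduced ωv := by unfold CoxeterSystem.IsReduced; rw [← hωveq, hωvlen]
  have htred : cs.IsReduced ωt := by unfold CoxeterSystem.IsReduced; rw [← hωteq, hωtlen]
  have hcat : cs.IsReduced (ωv ++ ωt) := by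
    unfold CoxeterSystem.IsReduced
    rw [cs.wordProd_append, ← hωveq, ← hωteq, hlen, List.length_append, hωvlen, hωtlen]
  have h1 : Q (v * t) = ((ωv ++ ωt).map q).prod := by
    rw [← hQ _ hcat, cs.wordProd_append, ← hωveq, ← hωteq]
  rw [h1, List.map_append, List.prod_append, ← hQ _ hvred, ← hQ _ htred, ← hωveq, ← hωteq]

end HeckeFactorAux

open scoped Classical in
/-- **Factorization `h̃_U = (Σ_{v ∈ W_U ∩ X_T} (-1)^{ℓ v} q_v⁻¹ e_v) · h̃_T`.**
Let `T ⊆ U ⊆ S` with `U` spherical, and let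
`X_T = {w ∈ W : ℓ(wt) > ℓ(w) for all t ∈ T}` be the set of `(∅,T)`-reduced elements.
Then in the Hecke algebra `R_q[W]`, with `h̃_V = Σ_{w ∈ W_V} (-1)^{ℓ w} q_w⁻¹ e_w`, one has
`h̃_U = (Σ_{v ∈ W_U ∩ X_T} (-1)^{ℓ v} q_v⁻¹ e_v) · h̃_T`. -/
theorem hecke_hTilde_factorization {B : Type*} {W : Type*} [Group W] {M : CoxeterMatrix B}
    (cs : CoxeterSystem M W) (q : B → ℝ)
    (hq0 : ∀ i : B, 0 < q i)
    (hqconj : ∀ i j : B, IsConj (cs.simple i) (cs.simple j) → q i = q j)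
    (Q : W → ℝ)
    (hQ : ∀ ω : List B, cs.IsReduced ω → Q (cs.wordProd ω) = (ω.map q).prod)
    (mul : (W →₀ ℝ) →ₗ[ℝ] (W →₀ ℝ) →ₗ[ℝ] (W →₀ ℝ))
    (hassoc : ∀ x y z : W →₀ ℝ, mul (mul x y) z = mul x (mul y z))
    (hone : ∀ x : W →₀ ℝ, mul (Finsupp.single 1 1) x = x)
    (hone' : ∀ x : W →₀ ℝ, mul x (Finsupp.single 1 1) = x)
    (hgt : ∀ (i : B) (w : W), cs.length w < cs.length (cs.simple i * w) →
      mul (Finsupp.single (cs.simple i) 1) (Finsupp.single w 1) =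
        Finsupp.single (cs.simple i * w) 1)
    (hlt : ∀ (i : B) (w : W), cs.length (cs.simple i * w) < cs.length w →
      mul (Finsupp.single (cs.simple i) 1) (Finsupp.single w 1) =
        q i • Finsupp.single (cs.simple i * w) 1 + (q i - 1) • Finsupp.single w 1)
    (T U : Set B) (hTU : T ⊆ U)
    (hfinU : ((Subgroup.closure (cs.simple '' U) : Subgroup W) : Set W).Finite)
    (hfinT : ((Subgroup.closure (cs.simple '' T) : Subgroup W) : Set W).Finite) :
    (∑ w ∈ hfinU.toFinset, Finsupp.single w ((-1 : ℝ) ^ cs.length w * (Q w)⁻¹)) =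
      mul
        (∑ v ∈ hfinU.toFinset.filter
            (fun v => ∀ i ∈ T, cs.length v < cs.length (v * cs.simple i)),
          Finsupp.single v ((-1 : ℝ) ^ cs.length v * (Q v)⁻¹))
        (∑ w ∈ hfinT.toFinset, Finsupp.single w ((-1 : ℝ) ^ cs.length w * (Q w)⁻¹)) := by
  classical
  set a : W → ℝ := fun w => (-1 : ℝ) ^ cs.length w * (Q w)⁻¹ with ha
  set A := hfinU.toFinset.filter
      (fun v => ∀ i ∈ T, cs.length v < cs.length (v * cs.simple i)) with hA
  have hWTU : Subgroup.closure (cs.simple '' T) ≤ Subgroup.closure (cs.simple '' U) :=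
    Subgroup.closure_mono (Set.image_mono hTU)
  -- length additivity
  have hadd : ∀ v ∈ A, ∀ t ∈ hfinT.toFinset,
      cs.length (v * t) = cs.length v + cs.length t := by
    intro v hv t ht
    have hvP := (Finset.mem_filter.mp hv).2
    exact HeckeFactorAux.noDescent_lenAdd cs T hfinT v hvP t ((Set.Finite.mem_toFinset hfinT).mp ht)
  -- term-by-term computation
  have hterm : ∀ v ∈ A, ∀ t ∈ hfinT.toFinset,
      mul (Finsupp.single v (a v)) (Finsupp.single t (a t)) =
        Finsupp.single (v * t) (a (v * t)) := by
    intro v hv t ht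
    have hlen := hadd v hv t ht
    have hsm := HeckeFactorAux.hecke_single_mul cs mul hassoc hone hgt
      (cs.length v) v t rfl hlen
    have hQm := HeckeFactorAux.Q_mul cs q Q hQ hlen
    have haa : a (v * t) = a v * a t := by
      rw [ha]
      simp only []
      rw [hlen, hQm, pow_add, mul_inv]
      ring
    have h1 : Finsupp.single v (a v) = a v • Finsupp.single v (1 : ℝ) := by
      rw [Finsupp.smul_single', mul_one]
    have h2 : Finsupp.single t (a t) = a t • Finsupp.single t (1 : ℝ) := by
      rw [Finsupp.smul_single', mul_one]
    rw [h1, h2, map_smul, map_smul, LinearMap.smul_apply, hsm, smul_smul,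
      Finsupp.smul_single', mul_one, haa, mul_comm]
  -- expand RHS into double sum
  rw [map_sum mul _ A, LinearMap.sum_apply]
  have hinner : ∀ v ∈ A,
      mul (Finsupp.single v (a v)) (∑ t ∈ hfinT.toFinset, Finsupp.single t (a t)) =
        ∑ t ∈ hfinT.toFinset, Finsupp.single (v * t) (a (v * t)) := by
    intro v hv
    rw [map_sum]
    exact Finset.sum_congr rfl (fun t ht => hterm v hv t ht)
  rw [Finset.sum_congr rfl hinner]
  -- convert to sum over product and apply bijection
  rw [← Finset.sum_product (s := A) (t := hfinT.toFinset)
    (f := fun p => Finsupp.single (p.1 * p.2) (a (p.1 * p.2)))]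
  refine (Finset.sum_bij (i := fun (p : W × W) (_ : p ∈ A ×ˢ hfinT.toFinset) => p.1 * p.2)
    ?_ ?_ ?_ ?_).symm
  · -- maps into hfinU.toFinset
    rintro ⟨v, t⟩ hp
    rw [Finset.mem_product] at hp
    have hvU : v ∈ Subgroup.closure (cs.simple '' U) :=
      (Set.Finite.mem_toFinset hfinU).mp (Finset.mem_filter.mp hp.1).1
    have htT : t ∈ Subgroup.closure (cs.simple '' T) :=
      (Set.Finite.mem_toFinset hfinT).mp hp.2
    exact (Set.Finite.mem_toFinset hfinU).mpr (mul_mem hvU (hWTU htT))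
  · -- injective
    rintro ⟨v, t⟩ hp ⟨v', t'⟩ hp' heq
    rw [Finset.mem_product] at hp hp'
    simp only [] at heq
    have hvP := (Finset.mem_filter.mp hp.1).2
    have hv'P := (Finset.mem_filter.mp hp'.1).2
    have htT : t ∈ Subgroup.closure (cs.simple '' T) :=
      (Set.Finite.mem_toFinset hfinT).mp hp.2
    have ht'T : t' ∈ Subgroup.closure (cs.simple '' T) :=
      (Set.Finite.mem_toFinset hfinT).mp hp'.2
    have h1 : v' = v * (t * t'⁻¹) := by
      rw [← mul_assoc, heq]
      group
    have h2 : v = v' * (t' * t⁻¹) := by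
      rw [← mul_assoc, ← heq]
      group
    have hl1 : cs.length v' = cs.length v + cs.length (t * t'⁻¹) := by
      rw [h1]
      exact HeckeFactorAux.noDescent_lenAdd cs T hfinT v hvP _ (mul_mem htT (inv_mem ht'T))
    have hl2 : cs.length v = cs.length v' + cs.length (t' * t⁻¹) := by
      rw [h2]
      exact HeckeFactorAux.noDescent_lenAdd cs T hfinT v' hv'P _ (mul_mem ht'T (inv_mem htT))
    have hz : cs.length (t * t'⁻¹) = 0 := by omega
    have htt' : t = t' := by
      have := cs.length_eq_zero_iff.mp hz
      rw [mul_inv_eq_one] at this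
      exact this
    subst htt'
    have hvv' : v = v' := mul_right_cancel heq
    rw [hvv']
  · -- surjective
    intro w hw
    have hwU : w ∈ Subgroup.closure (cs.simple '' U) := (Set.Finite.mem_toFinset hfinU).mp hw
    have hne : (hfinT.toFinset).Nonempty :=
      ⟨1, (Set.Finite.mem_toFinset hfinT).mpr (Subgroup.one_mem _)⟩
    obtain ⟨u₀, hu₀F, hu₀min⟩ :=
      Finset.exists_min_image hfinT.toFinset (fun u => cs.length (w * u)) hne
    have hu₀T : u₀ ∈ Subgroup.closure (cs.simple '' T) :=
      (Set.Finite.mem_toFinset hfinT).mp hu₀F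
    refine ⟨(w * u₀, u₀⁻¹), ?_, ?_⟩
    · rw [Finset.mem_product]
      dsimp only
      constructor
      · rw [hA, Finset.mem_filter]
        constructor
        · exact (Set.Finite.mem_toFinset hfinU).mpr (mul_mem hwU (hWTU hu₀T))
        · intro j hj
          have hle : cs.length (w * u₀) ≤ cs.length (w * u₀ * cs.simple j) := by
            have h3 : w * u₀ * cs.simple j = w * (u₀ * cs.simple j) := by group
            rw [h3]
            exact hu₀min (u₀ * cs.simple j) ((Set.Finite.mem_toFinset hfinT).mpr
              (mul_mem hu₀T (Subgroup.subset_closure ⟨j, hj, rfl⟩)))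
          have hne2 := cs.length_mul_simple_ne (w * u₀) j
          omega
      · exact (Set.Finite.mem_toFinset hfinT).mpr (inv_mem hu₀T)
    · dsimp only
      group
  · -- values agree
    rintro ⟨v, t⟩ hp
    rfl
end

section
/- For every element w of a Coxeter group W with Coxeter system (W,S), the set In(w) := {s ∈ S : ℓ(ws) < ℓ(w)} is a spherical subset of S; that is, the standard parabolic subgroup of W generated by In(w) is finite. -/
namespace InWSph

open CoxeterSystem List Function

attribute [local instance] Classical.propDecidable

noncomputable section

theorem conj_eq_iff {G : Type*} [Group G] (x y c t : G) :
    x * t * y = c ↔ t = x⁻¹ * c * y⁻¹ := by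
  constructor
  · intro h; rw [← h]; group
  · intro h; rw [h]; group

variable {B : Type*} {W : Type*} [Group W] {M : CoxeterMatrix B} (cs : CoxeterSystem M W)

local prefix:100 "s" => cs.simple
local prefix:100 "π" => cs.wordProd
local prefix:100 "ℓ" => cs.length
local prefix:100 "ris" => cs.rightInvSeq

/-- The permutation of `W × ℤˣ` associated to a simple reflection. -/
def sigmaFun (i : B) : W × ℤˣ → W × ℤˣ :=
  fun p => (s i * p.1 * s i, if p.1 = s i then -p.2 else p.2)

theorem sigmaFun_involutive (i : B) : Involutive (sigmaFun cs i) := by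
  rintro ⟨t, e⟩
  simp only [sigmaFun]
  by_cases h : t = s i
  · subst h
    simp [cs.simple_mul_simple_cancel_right, cs.simple_mul_simple_self]
  · have h2 : s i * t * s i ≠ s i := by
      intro hc
      apply h
      have := congrArg (fun x => s i * x * s i) hc
      simpa [mul_assoc, cs.simple_mul_simple_cancel_left,
        cs.simple_mul_simple_cancel_right] using this
    simp only [h2, if_neg, h, if_neg, Prod.mk.injEq]
    constructor
    · rw [show s i * (s i * t * s i) * s i = (s i * s i) * t * (s i * s i) by group]
      simp [cs.simple_mul_simple_self]
    · rfl

/-- The permutation of `W × ℤˣ` associated to a simple reflection. -/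
def sigma (i : B) : Equiv.Perm (W × ℤˣ) := (sigmaFun_involutive cs i).toPerm

theorem sigma_apply (i : B) (p : W × ℤˣ) :
    sigma cs i p = (s i * p.1 * s i, if p.1 = s i then -p.2 else p.2) := rfl

theorem comm_pow (i j : B) (r : ℕ) :
    s j * (s i * s j)^r = (s j * s i)^r * s j := by
  induction r with
  | zero => simp
  | succ r ih =>
    rw [pow_succ' (s i * s j), pow_succ (s j * s i)]
    calc s j * (s i * s j * (s i * s j) ^ r) = (s j * s i) * (s j * (s i * s j)^r) := by
          simp only [mul_assoc]
      _ = (s j * s i) * ((s j * s i) ^ r * s j) := by rw [ih]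
      _ = (s j * s i) ^ r * (s j * s i) * s j := by
          rw [← mul_assoc, ← pow_succ', pow_succ]

theorem inv_pow_simple (i j : B) (r : ℕ) :
    ((s i * s j)^r)⁻¹ = (s j * s i)^r := by
  rw [← inv_pow, mul_inv_rev, cs.inv_simple, cs.inv_simple]

theorem pow_sj_pow (i j : B) (r : ℕ) :
    (s j * s i)^r * s j * (s i * s j)^r = (s j * s i)^(2*r) * s j := by
  rw [mul_assoc, comm_pow cs i j r, ← mul_assoc, ← pow_add, two_mul]

theorem pow_sjsisj_pow (i j : B) (r : ℕ) :
    (s j * s i)^r * (s j * s i * s j) * (s i * s j)^r = (s j * s i)^(2*r+1) * s j := by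
  calc (s j * s i)^r * (s j * s i * s j) * (s i * s j)^r
      = (s j * s i)^r * (s j * s i) * (s j * (s i * s j)^r) := by simp only [mul_assoc]
    _ = (s j * s i)^r * (s j * s i)^1 * ((s j * s i)^r * s j) := by
        rw [comm_pow cs i j r, pow_one]
    _ = (s j * s i)^r * (s j * s i)^1 * (s j * s i)^r * s j := by simp only [mul_assoc]
    _ = (s j * s i)^(2*r+1) * s j := by
        rw [← pow_add, ← pow_add]
        congr 2
        omega

theorem sigma_two_pow_apply (i j : B) (r : ℕ) (t : W) (e : ℤˣ) :
    ((sigma cs i * sigma cs j)^r) (t, e) =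
      ((s i * s j)^r * t * (s j * s i)^r,
        e * ∏ n ∈ Finset.range (2*r), (if t = (s j * s i)^n * s j then (-1:ℤˣ) else 1)) := by
  induction r with
  | zero => simp
  | succ r ih =>
    rw [pow_succ']
    rw [show ((sigma cs i * sigma cs j) * (sigma cs i * sigma cs j) ^ r) (t, e)
        = (sigma cs i) ((sigma cs j) (((sigma cs i * sigma cs j) ^ r) (t, e))) by rfl]
    rw [ih, sigma_apply, sigma_apply]
    have hcond1 : ((s i * s j)^r * t * (s j * s i)^r = s j) ↔ (t = (s j * s i)^(2*r) * s j) := by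
      rw [conj_eq_iff, inv_pow_simple cs i j, inv_pow_simple cs j i, pow_sj_pow cs i j]
    have hcond2 : (s j * ((s i * s j)^r * t * (s j * s i)^r) * s j = s i)
        ↔ (t = (s j * s i)^(2*r+1) * s j) := by
      rw [conj_eq_iff, cs.inv_simple, conj_eq_iff, inv_pow_simple cs i j, inv_pow_simple cs j i,
        pow_sjsisj_pow cs i j]
    have hsplit : (∏ n ∈ Finset.range (2*(r+1)), (if t = (s j * s i)^n * s j then (-1:ℤˣ) else 1))
        = (∏ n ∈ Finset.range (2*r), (if t = (s j * s i)^n * s j then (-1:ℤˣ) else 1))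
          * (if t = (s j * s i)^(2*r) * s j then (-1:ℤˣ) else 1)
          * (if t = (s j * s i)^(2*r+1) * s j then (-1:ℤˣ) else 1) := by
      rw [show 2*(r+1) = 2*r+1+1 by ring, Finset.prod_range_succ, Finset.prod_range_succ]
    refine Prod.ext ?_ ?_
    · show s i * (s j * ((s i * s j)^r * t * (s j * s i)^r) * s j) * s i
        = (s i * s j)^(r+1) * t * (s j * s i)^(r+1)
      rw [pow_succ' (s i * s j), pow_succ (s j * s i)]
      simp only [mul_assoc]
    · show (if s j * ((s i * s j)^r * t * (s j * s i)^r) * s j = s i then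
          -(if (s i * s j)^r * t * (s j * s i)^r = s j
            then -(e * ∏ n ∈ Finset.range (2*r), (if t = (s j * s i)^n * s j then (-1:ℤˣ) else 1))
            else (e * ∏ n ∈ Finset.range (2*r), (if t = (s j * s i)^n * s j then (-1:ℤˣ) else 1)))
          else
          (if (s i * s j)^r * t * (s j * s i)^r = s j
            then -(e * ∏ n ∈ Finset.range (2*r), (if t = (s j * s i)^n * s j then (-1:ℤˣ) else 1))
            else (e * ∏ n ∈ Finset.range (2*r), (if t = (s j * s i)^n * s j then (-1:ℤˣ) else 1))))
        = e * ∏ n ∈ Finset.range (2*(r+1)), (if t = (s j * s i)^n * s j then (-1:ℤˣ) else 1)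
      rw [hsplit, hcond1, hcond2]
      by_cases h1 : t = (s j * s i)^(2*r) * s j <;> by_cases h2 : t = (s j * s i)^(2*r+1) * s j <;>
        simp [h1, h2]


theorem sigma_liftable : M.IsLiftable (sigma cs) := by
  intro i j
  apply Equiv.ext
  rintro ⟨t, e⟩
  rw [Equiv.Perm.one_apply, sigma_two_pow_apply cs i j (M i j) t e]
  refine Prod.ext ?_ ?_
  · show (s i * s j) ^ M i j * t * (s j * s i) ^ M i j = t
    rw [cs.simple_mul_simple_pow i j, cs.simple_mul_simple_pow' i j, one_mul, mul_one]
  · show (e * ∏ n ∈ Finset.range (2 * M i j),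
        (if t = (s j * s i)^n * s j then (-1:ℤˣ) else 1) : ℤˣ) = e
    rw [two_mul, Finset.prod_range_add]
    have : ∀ x ∈ Finset.range (M i j),
        (if t = (s j * s i)^(M i j + x) * s j then (-1:ℤˣ) else 1)
          = (if t = (s j * s i)^x * s j then (-1:ℤˣ) else 1) := by
      intro x _
      rw [pow_add, cs.simple_mul_simple_pow' i j, one_mul]
    rw [Finset.prod_congr rfl this, ← mul_assoc, mul_assoc e, Int.units_mul_self, mul_one]

/-- The sign homomorphism into permutations of `W × ℤˣ`. -/
def phi : W →* Equiv.Perm (W × ℤˣ) := cs.lift ⟨sigma cs, sigma_liftable cs⟩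

theorem phi_simple (i : B) : phi cs (s i) = sigma cs i := cs.lift_apply_simple (sigma_liftable cs) i

theorem phi_wordProd (ω : List B) (t : W) (e : ℤˣ) :
    phi cs (π ω) (t, e) = (π ω * t * (π ω)⁻¹, e * (-1:ℤˣ)^((ris ω).count t)) := by
  induction ω generalizing t e with
  | nil => simp [cs.wordProd_nil]
  | cons i ω ih =>
    rw [cs.wordProd_cons, map_mul]
    rw [show (phi cs (s i) * phi cs (π ω)) (t, e) = phi cs (s i) (phi cs (π ω) (t, e)) by rfl]
    rw [ih, phi_simple, sigma_apply]
    have hris : ris (i :: ω) = (π ω)⁻¹ * s i * π ω :: ris ω := rfl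
    refine Prod.ext ?_ ?_
    · show s i * (π ω * t * (π ω)⁻¹) * s i = (s i * π ω) * t * (s i * π ω)⁻¹
      rw [mul_inv_rev, cs.inv_simple]
      simp only [mul_assoc]
    · show (if π ω * t * (π ω)⁻¹ = s i then -(e * (-1:ℤˣ)^((ris ω).count t))
          else (e * (-1:ℤˣ)^((ris ω).count t)))
        = e * (-1:ℤˣ)^((ris (i :: ω)).count t)
      have hcond : (π ω * t * (π ω)⁻¹ = s i) ↔ (t = (π ω)⁻¹ * s i * π ω) := by
        rw [conj_eq_iff, inv_inv]
      rw [hris, List.count_cons, hcond]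
      simp only [beq_iff_eq]
      by_cases h : t = (π ω)⁻¹ * s i * π ω
      · rw [if_pos h, if_pos h.symm, pow_succ, ← mul_assoc, mul_neg_one]
      · rw [if_neg h, if_neg (fun hc => h hc.symm), Nat.add_zero]

/-- The sign of the reflection `t` relative to `w`. -/
def nn (w t : W) : ℤˣ := (phi cs w (t, 1)).2

theorem nn_eq_count (ω : List B) (t : W) :
    nn cs (π ω) t = (-1 : ℤˣ)^((ris ω).count t) := by
  unfold nn
  rw [phi_wordProd, one_mul]

theorem phi_apply_eq (w t : W) (e : ℤˣ) : phi cs w (t, e) = (w * t * w⁻¹, e * nn cs w t) := by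
  obtain ⟨ω, rfl⟩ := cs.wordProd_surjective w
  rw [phi_wordProd, nn_eq_count]

theorem nn_cocycle (x y t : W) : nn cs (x * y) t = nn cs y t * nn cs x (y * t * y⁻¹) := by
  unfold nn
  rw [map_mul]
  rw [show (phi cs x * phi cs y) (t, 1) = phi cs x (phi cs y (t, 1)) by rfl]
  rw [phi_apply_eq cs y t 1, one_mul, phi_apply_eq cs x (y * t * y⁻¹) (nn cs y t)]
  rfl

theorem nn_one (t : W) : nn cs 1 t = 1 := by
  have := nn_eq_count cs [] t
  simpa using this

theorem nn_simple_self (i : B) : nn cs (s i) (s i) = -1 := by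
  have h := nn_eq_count cs [i] (s i)
  rw [cs.wordProd_singleton, cs.rightInvSeq_singleton] at h
  simpa using h

theorem isRightInversion_of_nn {w t : W} (h : nn cs w t = -1) : cs.IsRightInversion w t := by
  obtain ⟨ω, hred, hw⟩ := cs.exists_reduced_word' w
  subst hw
  rw [nn_eq_count] at h
  have hne : (ris ω).count t ≠ 0 := by
    intro hc
    rw [hc, pow_zero] at h
    exact absurd h (by decide)
  have hmem : t ∈ ris ω := List.count_pos_iff.mp (Nat.pos_of_ne_zero hne)
  exact cs.isRightInversion_of_mem_rightInvSeq hred hmem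

theorem nn_eq_one_of_not_inversion {w t : W} (hrefl : cs.IsReflection t)
    (h : ¬ ℓ (w * t) < ℓ w) : nn cs w t = 1 := by
  rcases Int.units_eq_one_or (nn cs w t) with h1 | h1
  · exact h1
  · exact absurd (isRightInversion_of_nn cs h1).2 h

theorem nn_refl {t : W} (hrefl : cs.IsReflection t) : nn cs t t = -1 := by
  obtain ⟨v, i, rfl⟩ := hrefl
  have e1 : nn cs (v * s i * v⁻¹) (v * s i * v⁻¹)
      = nn cs v⁻¹ (v * s i * v⁻¹) * nn cs (v * s i) (s i) := by
    rw [nn_cocycle cs (v * s i) v⁻¹]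
    congr 2
    rw [inv_inv]
    group
  have e2 : nn cs (v * s i) (s i) = -nn cs v (s i) := by
    rw [nn_cocycle cs v (s i)]
    rw [show s i * s i * (s i)⁻¹ = s i by group]
    rw [nn_simple_self]
    simp [mul_comm]
  have e3 : nn cs v (s i) * nn cs v⁻¹ (v * s i * v⁻¹) = 1 := by
    have h := nn_cocycle cs v⁻¹ v (s i)
    rw [inv_mul_cancel, nn_one] at h
    exact h.symm
  rw [e1, e2, mul_neg]
  have e4 : nn cs v⁻¹ (v * s i * v⁻¹) * nn cs v (s i) = 1 := by rw [mul_comm]; exact e3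
  rw [e4]

theorem nn_eq_neg_one_of_inversion {w t : W} (hrefl : cs.IsReflection t)
    (hlt : ℓ (w * t) < ℓ w) : nn cs w t = -1 := by
  have h1 : w = (w * t) * t := by rw [mul_assoc, hrefl.mul_self, mul_one]
  rw [h1, nn_cocycle]
  rw [show t * t * t⁻¹ = t by group]
  rw [nn_refl cs hrefl]
  rw [nn_eq_one_of_not_inversion cs hrefl (by rw [← h1]; omega)]
  simp

theorem exists_eraseIdx_of_inversion {w t : W} (hrefl : cs.IsReflection t)
    (hlt : ℓ (w * t) < ℓ w) (ω : List B) (hω : π ω = w) :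
    ∃ k, k < ω.length ∧ w * t = π (ω.eraseIdx k) := by
  have hmem : t ∈ ris ω := by
    have hc := nn_eq_count cs ω t
    rw [hω, nn_eq_neg_one_of_inversion cs hrefl hlt] at hc
    have hne : (ris ω).count t ≠ 0 := by
      intro h0
      rw [h0, pow_zero] at hc
      exact absurd hc.symm (by decide)
    exact List.count_pos_iff.mp (Nat.pos_of_ne_zero hne)
  obtain ⟨k, hk, hget⟩ := List.mem_iff_getElem.mp hmem
  rw [cs.length_rightInvSeq] at hk
  refine ⟨k, hk, ?_⟩
  have := cs.wordProd_mul_getD_rightInvSeq ω k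
  rw [List.getD_eq_getElem _ _ (by rw [cs.length_rightInvSeq]; exact hk), hget, hω] at this
  exact this

theorem isReduced_nil : cs.IsReduced ([] : List B) := by
  simp [CoxeterSystem.IsReduced]

theorem exists_reduced_sublist :
    ∀ (n : ℕ) (ω : List B), ω.length ≤ n →
      ∃ τ, τ.Sublist ω ∧ cs.IsReduced τ ∧ π τ = π ω := by
  intro n
  induction n with
  | zero =>
    intro ω hω
    rw [List.eq_nil_of_length_eq_zero (Nat.le_zero.mp hω)]
    exact ⟨[], List.Sublist.refl _, isReduced_nil cs, rfl⟩
  | succ n ih =>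
    intro ω hlen
    by_cases hred : cs.IsReduced ω
    · exact ⟨ω, List.Sublist.refl ω, hred, rfl⟩
    · have hP : ∃ k, ¬ cs.IsReduced (ω.take (k+1)) := by
        refine ⟨ω.length, ?_⟩
        rw [List.take_of_length_le (by omega)]
        exact hred
      let k := Nat.find hP
      have hk1 : ¬ cs.IsReduced (ω.take (k+1)) := Nat.find_spec hP
      have hmin : ∀ j, j < k → cs.IsReduced (ω.take (j+1)) := by
        intro j hj
        have := Nat.find_min hP hj
        simpa using this
      have hkred : cs.IsReduced (ω.take k) := by
        rcases Nat.eq_zero_or_pos k with h0 | h0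
        · rw [h0]
          simpa using isReduced_nil cs
        · have := hmin (k-1) (by omega)
          rw [show k - 1 + 1 = k by omega] at this
          exact this
      have hklen : k < ω.length := by
        by_contra hcon
        push_neg at hcon
        rw [List.take_of_length_le hcon] at hkred
        exact hred hkred
      have htake : ω.take (k+1) = ω.take k ++ [ω[k]] := by
        rw [List.take_succ, List.getElem?_eq_getElem hklen]
        rfl
      have hlen_take : (ω.take k).length = k := by
        rw [List.length_take]
        omega
      have hltake : ℓ (π (ω.take k)) = k := by
        have := hkred
        unfold CoxeterSystem.IsReduced at this
        omega
      have hlt : ℓ (π (ω.take k) * s ω[k]) < ℓ (π (ω.take k)) := by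
        have hne := hk1
        rw [htake] at hne
        unfold CoxeterSystem.IsReduced at hne
        rw [cs.wordProd_append, cs.wordProd_singleton] at hne
        rcases cs.length_mul_simple (π (ω.take k)) ω[k] with h | h
        · exfalso
          apply hne
          rw [h, hltake, List.length_append, hlen_take]
          rfl
        · omega
      obtain ⟨k0, hk0, heq⟩ := exists_eraseIdx_of_inversion cs (cs.isReflection_simple ω[k])
        hlt (ω.take k) rfl
      have hπ : π ((ω.take k).eraseIdx k0 ++ ω.drop (k+1)) = π ω := by
        conv_rhs => rw [← List.take_append_drop (k+1) ω]
        rw [cs.wordProd_append, cs.wordProd_append, ← heq, htake, cs.wordProd_append,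
          cs.wordProd_singleton]
      have hsub : ((ω.take k).eraseIdx k0 ++ ω.drop (k+1)).Sublist ω := by
        conv_rhs => rw [← List.take_append_drop (k+1) ω]
        apply List.Sublist.append
        · refine (List.eraseIdx_sublist _ k0).trans ?_
          rw [htake]
          exact List.sublist_append_left _ _
        · exact List.Sublist.refl _
      have hlen' : ((ω.take k).eraseIdx k0 ++ ω.drop (k+1)).length ≤ n := by
        rw [hlen_take] at hk0
        rw [List.length_append, List.length_eraseIdx, List.length_drop, hlen_take, if_pos hk0]
        omega
      obtain ⟨τ, hτsub, hτred, hτπ⟩ := ih _ hlen'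
      exact ⟨τ, hτsub.trans hsub, hτred, by rw [hτπ, hπ]⟩

theorem exists_reduced_sublist' (ω : List B) :
    ∃ τ, τ.Sublist ω ∧ cs.IsReduced τ ∧ π τ = π ω :=
  exists_reduced_sublist cs ω.length ω le_rfl

/-- A single step of the Bruhat order: `y` is obtained from `x` by multiplying by a
reflection on the right, decreasing the length. -/
def bstep (x y : W) : Prop := ∃ t, cs.IsReflection t ∧ y = x * t ∧ ℓ y < ℓ x

/-- The Bruhat order (defined via chains of reflections). -/
def ble (v w : W) : Prop := Relation.ReflTransGen (bstep cs) w v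

theorem ble_refl (w : W) : ble cs w w := Relation.ReflTransGen.refl

theorem ble_trans {v u w : W} (h1 : ble cs v u) (h2 : ble cs u w) : ble cs v w :=
  Relation.ReflTransGen.trans h2 h1

theorem ble_tail {v w : W} (h : ble cs v w) {v' : W} (hs : bstep cs v v') : ble cs v' w :=
  Relation.ReflTransGen.tail h hs

theorem ble_head {w w' v : W} (hs : bstep cs w w') (h : ble cs v w') : ble cs v w :=
  Relation.ReflTransGen.head hs h

theorem ble_length {v w : W} (h : ble cs v w) : ℓ v ≤ ℓ w := by
  induction h with
  | refl => exact le_rfl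
  | tail _ hbc ih =>
    obtain ⟨t, _, rfl, hlt⟩ := hbc
    omega

theorem bstep_simple {v : W} {i : B} (hlt : ℓ (v * s i) < ℓ v) : bstep cs v (v * s i) :=
  ⟨s i, cs.isReflection_simple i, rfl, hlt⟩

theorem ble_one : ∀ (n : ℕ) (w : W), ℓ w ≤ n → ble cs 1 w := by
  intro n
  induction n with
  | zero =>
    intro w hw
    rw [cs.length_eq_zero_iff.mp (Nat.le_zero.mp hw)]
    exact ble_refl cs 1
  | succ n ih =>
    intro w hw
    by_cases hone : w = 1
    · rw [hone]; exact ble_refl cs 1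
    · obtain ⟨i, hi⟩ := cs.exists_rightDescent_of_ne_one hone
      have hlt : ℓ (w * s i) < ℓ w := hi
      exact ble_head cs (bstep_simple cs hlt) (ih (w * s i) (by omega))

theorem sw : ∀ (n : ℕ) (w v : W), ℓ w ≤ n → ble cs v w →
    ∀ ω, cs.IsReduced ω → π ω = w →
    ∃ τ, τ.Sublist ω ∧ cs.IsReduced τ ∧ π τ = v := by
  intro n
  induction n with
  | zero =>
    intro w v hn h ω hred hπ
    rcases h.cases_head with heq | ⟨u, hstep, _⟩
    · exact ⟨ω, List.Sublist.refl _, hred, heq ▸ hπ⟩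
    · obtain ⟨t, _, rfl, hlt⟩ := hstep
      omega
  | succ n ih =>
    intro w v hn h ω hred hπ
    rcases h.cases_head with heq | ⟨u, hstep, hchain⟩
    · exact ⟨ω, List.Sublist.refl _, hred, heq ▸ hπ⟩
    · obtain ⟨t, htrefl, rfl, hlt⟩ := hstep
      obtain ⟨k, hk, heq2⟩ := exists_eraseIdx_of_inversion cs htrefl hlt ω hπ
      obtain ⟨τu, hsubu, hredu, hπu⟩ := exists_reduced_sublist' cs (ω.eraseIdx k)
      have hπu' : π τu = w * t := by rw [hπu]; exact heq2.symm
      obtain ⟨τ, hsub, hredτ, hπτ⟩ := ih (w * t) v (by omega) hchain τu hredu hπu'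
      exact ⟨τ, hsub.trans (hsubu.trans (ω.eraseIdx_sublist k)), hredτ, hπτ⟩

theorem triple : ∀ n : ℕ,
    (∀ w : W, ℓ w ≤ n → ∀ (v : W) (i : B), ble cs v w → ℓ (w * s i) < ℓ w →
      ble cs (v * s i) w) ∧
    (∀ b : W, ℓ b ≤ n → ∀ (a : W) (i : B), ble cs a b → ℓ (a * s i) = ℓ a + 1 →
      ℓ (b * s i) = ℓ b + 1 → ble cs (a * s i) (b * s i)) ∧
    (∀ w : W, ℓ w ≤ n → ∀ ω τ : List B, cs.IsReduced ω → π ω = w → τ.Sublist ω →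
      cs.IsReduced τ → ble cs (π τ) w) := by
  intro n
  induction n using Nat.strong_induction_on with
  | _ n ih =>
  have hLIFT : ∀ w : W, ℓ w ≤ n → ∀ (v : W) (i : B), ble cs v w → ℓ (w * s i) < ℓ w →
      ble cs (v * s i) w := by
    intro w hwn v i hble hdesc
    have hlen_wsi : ℓ (w * s i) = ℓ w - 1 ∧ 1 ≤ ℓ w := by
      rcases cs.length_mul_simple w i with h | h <;> omega
    obtain ⟨ρ, hρred, hρeq⟩ := cs.exists_reduced_word' (w * s i)
    have hπω : π (ρ ++ [i]) = w := by
      rw [cs.wordProd_append, cs.wordProd_singleton, ← hρeq, cs.simple_mul_simple_cancel_right]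
    have hρlen : ρ.length = ℓ w - 1 := by
      have := hρred
      unfold CoxeterSystem.IsReduced at this
      rw [← hρeq] at this
      omega
    have hωred : cs.IsReduced (ρ ++ [i]) := by
      unfold CoxeterSystem.IsReduced
      rw [hπω, List.length_append, hρlen]
      simp only [List.length_singleton]
      omega
    obtain ⟨τ, hτsub, hτred, hτπ⟩ := sw cs (ℓ w) w v le_rfl hble (ρ ++ [i]) hωred hπω
    obtain ⟨l₁, l₂, hτeq, hl₁, hl₂⟩ := List.sublist_append_iff.mp hτsub
    rcases List.sublist_singleton.mp hl₂ with rfl | rfl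
    · -- τ avoids the final letter
      rw [List.append_nil] at hτeq
      subst hτeq
      by_cases hvi : ℓ (v * s i) < ℓ v
      · exact ble_tail cs hble (bstep_simple cs hvi)
      · have hup : ℓ (v * s i) = ℓ v + 1 := by
          rcases cs.length_mul_simple v i with h | h <;> omega
        -- v ≤ w * s i  via CONV at level n-1
        have hn1 : ℓ w - 1 < n := by omega
        have hconv := (ih (ℓ w - 1) hn1).2.2
        have hblev : ble cs v (w * s i) := by
          have := hconv (w * s i) (by omega) ρ τ hρred hρeq.symm hl₁ hτred
          rwa [hτπ] at this
        have hml := (ih (ℓ w - 1) hn1).2.1 (w * s i) (by omega) v i hblev hup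
          (by rw [cs.simple_mul_simple_cancel_right]; omega)
        rwa [cs.simple_mul_simple_cancel_right] at hml
    · -- τ ends with the final letter
      subst hτeq
      have hvsi : v * s i = π l₁ := by
        rw [← hτπ, cs.wordProd_append, cs.wordProd_singleton,
          cs.simple_mul_simple_cancel_right]
      have hlv : ℓ v = l₁.length + 1 := by
        have := hτred
        unfold CoxeterSystem.IsReduced at this
        rw [hτπ, List.length_append] at this
        simpa using this
      have hlt : ℓ (v * s i) < ℓ v := by
        rw [hvsi]
        calc ℓ (π l₁) ≤ l₁.length := cs.length_wordProd_le l₁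
        _ < ℓ v := by omega
      exact ble_tail cs hble (bstep_simple cs hlt)
  have hML : ∀ b : W, ℓ b ≤ n → ∀ (a : W) (i : B), ble cs a b → ℓ (a * s i) = ℓ a + 1 →
      ℓ (b * s i) = ℓ b + 1 → ble cs (a * s i) (b * s i) := by
    intro b hbn a i hble ha hb
    rcases hble.cases_head with heq | ⟨u, hstep, hchain⟩
    · rw [← heq]
      exact ble_refl cs _
    · obtain ⟨t, htrefl, rfl, hlt⟩ := hstep
      have hlevel : ℓ (b * t) < n := by omega
      by_cases hui : ℓ (b * t * s i) < ℓ (b * t)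
      · -- i is a descent of u := b * t : use LIFT at a lower level, then chain through b
        have hlift := (ih (ℓ (b * t)) hlevel).1 (b * t) le_rfl a i hchain hui
        refine ble_head cs ⟨s i, cs.isReflection_simple i, ?_, ?_⟩ (ble_head cs ⟨t, htrefl, rfl, hlt⟩ hlift)
        · rw [cs.simple_mul_simple_cancel_right]
        · omega
      · have hup : ℓ (b * t * s i) = ℓ (b * t) + 1 := by
          rcases cs.length_mul_simple (b * t) i with h | h <;> omega
        have hml := (ih (ℓ (b * t)) hlevel).2.1 (b * t) le_rfl a i hchain ha hup
        refine ble_head cs ⟨s i * t * s i, ?_, ?_, ?_⟩ hml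
        · have := htrefl.conj (s i)
          rwa [cs.inv_simple] at this
        · rw [show b * s i * (s i * t * s i) = b * (s i * s i) * t * s i by
            simp only [mul_assoc], cs.simple_mul_simple_self, mul_one]
        · omega
  have hCONV : ∀ w : W, ℓ w ≤ n → ∀ ω τ : List B, cs.IsReduced ω → π ω = w → τ.Sublist ω →
      cs.IsReduced τ → ble cs (π τ) w := by
    intro w hwn ω τ hωred hπω hτsub hτred
    rcases ω.eq_nil_or_concat' with rfl | ⟨ω₀, j, rfl⟩
    · rw [List.sublist_nil.mp hτsub, ← hπω]
      exact ble_refl cs _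
    · have hω₀red : cs.IsReduced ω₀ := by
        have := hωred.take ω₀.length
        rwa [List.take_left] at this
      have hw0 : π ω₀ = w * s j := by
        rw [← hπω, cs.wordProd_append, cs.wordProd_singleton,
          cs.simple_mul_simple_cancel_right]
      have hlw : ℓ w = ω₀.length + 1 := by
        have := hωred
        unfold CoxeterSystem.IsReduced at this
        rw [hπω, List.length_append] at this
        simpa using this
      have hlw0 : ℓ (w * s j) = ω₀.length := by
        rw [← hw0]
        exact hω₀red
      have hstepj : bstep cs w (w * s j) := bstep_simple cs (by omega)
      have hlevel : ℓ (w * s j) < n := by omega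
      obtain ⟨l₁, l₂, hτeq, hl₁, hl₂⟩ := List.sublist_append_iff.mp hτsub
      rcases List.sublist_singleton.mp hl₂ with rfl | rfl
      · rw [List.append_nil] at hτeq
        subst hτeq
        exact ble_head cs hstepj
          ((ih (ℓ (w * s j)) hlevel).2.2 (w * s j) le_rfl ω₀ τ hω₀red hw0 hl₁ hτred)
      · subst hτeq
        have hl₁red : cs.IsReduced l₁ := by
          have := hτred.take l₁.length
          rwa [List.take_left] at this
        have h1 : ble cs (π l₁) (w * s j) :=
          (ih (ℓ (w * s j)) hlevel).2.2 (w * s j) le_rfl ω₀ l₁ hω₀red hw0 hl₁ hl₁red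
        have hup : ℓ (π l₁ * s j) = ℓ (π l₁) + 1 := by
          have h2 := hτred
          unfold CoxeterSystem.IsReduced at h2 hl₁red
          rw [cs.wordProd_append, cs.wordProd_singleton, List.length_append] at h2
          simp only [List.length_singleton] at h2
          omega
        have hml := (ih (ℓ (w * s j)) hlevel).2.1 (w * s j) le_rfl (π l₁) j h1 hup
          (by rw [cs.simple_mul_simple_cancel_right]; omega)
        rw [cs.simple_mul_simple_cancel_right] at hml
        rwa [cs.wordProd_append, cs.wordProd_singleton]
  exact ⟨hLIFT, hML, hCONV⟩

theorem prodset_finite {F : Set W} (hF : F.Finite) :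
    ∀ n : ℕ, {x : W | ∃ l : List W, (∀ y ∈ l, y ∈ F) ∧ l.length ≤ n ∧ l.prod = x}.Finite := by
  intro n
  induction n with
  | zero =>
    apply Set.Finite.subset (Set.finite_singleton (1 : W))
    rintro x ⟨l, hl, hlen, rfl⟩
    rw [List.eq_nil_of_length_eq_zero (Nat.le_zero.mp hlen)]
    simp
  | succ n ih =>
    apply Set.Finite.subset (Set.Finite.image2 (fun a b => a * b) (hF.insert 1) ih)
    rintro x ⟨l, hl, hlen, rfl⟩
    cases l with
    | nil =>
      refine ⟨1, Set.mem_insert 1 F, 1, ⟨[], by simp, by simp, rfl⟩, by simp⟩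
    | cons y l' =>
      exact ⟨y, Set.mem_insert_of_mem _ (hl y (List.mem_cons_self)), l'.prod,
        ⟨l', fun z hz => hl z (List.mem_cons_of_mem y hz), by simpa using hlen,
          rfl⟩, (List.prod_cons).symm⟩

theorem descent_word_ble (w : W) :
    ∀ δ : List B, (∀ i ∈ δ, ℓ (w * s i) < ℓ w) → ble cs (π δ) w := by
  intro δ
  induction δ using List.reverseRecOn with
  | nil =>
    intro _
    have : π ([] : List B) = 1 := cs.wordProd_nil
    rw [this]
    exact ble_one cs (ℓ w) w le_rfl
  | append_singleton δ₀ i ihd =>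
    intro hmem
    rw [cs.wordProd_append, cs.wordProd_singleton]
    exact (triple cs (ℓ w)).1 w le_rfl (π δ₀) i
      (ihd fun k hk => hmem k (List.mem_append_left _ hk))
      (hmem i (List.mem_append_right _ (List.mem_singleton_self i)))

theorem mem_ris_of_descent {w : W} {ρ : List B} (hρ : cs.IsReduced ρ) (hπ : π ρ = w)
    {i : B} (h : ℓ (w * s i) < ℓ w) : s i ∈ ris ρ := by
  have hnn := nn_eq_neg_one_of_inversion cs (cs.isReflection_simple i) h
  rw [← hπ, nn_eq_count] at hnn
  have hne : (ris ρ).count (s i) ≠ 0 := by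
    intro h0
    rw [h0, pow_zero] at hnn
    exact absurd hnn (by decide)
  exact List.count_pos_iff.mp (Nat.pos_of_ne_zero hne)

theorem main (w : W) :
    ((Subgroup.closure (cs.simple '' {i : B | ℓ (w * s i) < ℓ w}) : Subgroup W) : Set W).Finite := by
  obtain ⟨ρ, hρred, hρeq⟩ := cs.exists_reduced_word' w
  have hF : (cs.simple '' {i : B | ℓ (w * s i) < ℓ w}).Finite := by
    apply Set.Finite.subset (ris ρ).finite_toSet
    rintro x ⟨i, hi, rfl⟩
    exact mem_ris_of_descent cs hρred hρeq.symm hi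
  apply Set.Finite.subset (prodset_finite hF (ℓ w))
  intro v hv
  rw [SetLike.mem_coe] at hv
  -- every element of the closure is the product of a word over the descent set
  have hword : ∃ δ : List B, (∀ i ∈ δ, ℓ (w * s i) < ℓ w) ∧ π δ = v := by
    induction hv using Subgroup.closure_induction with
    | mem x hx =>
      obtain ⟨i, hi, rfl⟩ := hx
      exact ⟨[i], by simpa using hi, cs.wordProd_singleton i⟩
    | one => exact ⟨[], by simp, cs.wordProd_nil⟩
    | mul x y _ _ hx hy =>
      obtain ⟨δ₁, hδ₁, rfl⟩ := hx
      obtain ⟨δ₂, hδ₂, rfl⟩ := hy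
      exact ⟨δ₁ ++ δ₂, fun k hk => (List.mem_append.mp hk).elim (hδ₁ k) (hδ₂ k),
        cs.wordProd_append δ₁ δ₂⟩
    | inv x _ hx =>
      obtain ⟨δ, hδ, rfl⟩ := hx
      exact ⟨δ.reverse, fun k hk => hδ k (List.mem_reverse.mp hk), cs.wordProd_reverse δ⟩
  obtain ⟨δ, hδmem, hδπ⟩ := hword
  obtain ⟨τ, hτsub, hτred, hτπ⟩ := exists_reduced_sublist' cs δ
  have hτmem : ∀ i ∈ τ, ℓ (w * s i) < ℓ w := fun k hk => hδmem k (hτsub.subset hk)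
  have hble : ble cs v w := by
    rw [← hδπ]
    exact descent_word_ble cs w δ hδmem
  have hlen : τ.length ≤ ℓ w := by
    have h1 : ℓ v ≤ ℓ w := ble_length cs hble
    have h2 := hτred
    unfold CoxeterSystem.IsReduced at h2
    rw [hτπ, hδπ] at h2
    omega
  refine ⟨τ.map cs.simple, ?_, ?_, ?_⟩
  · rintro y hy
    obtain ⟨k, hk, rfl⟩ := List.mem_map.mp hy
    exact ⟨k, hτmem k hk, rfl⟩
  · simpa using hlen
  · show π τ = v
    rw [hτπ, hδπ]

end

end InWSph

/-- **`In(w)` is spherical.**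
For every element `w` of a Coxeter group `W` with Coxeter system `(W, S)`, the set
`In(w) = {s ∈ S : ℓ(ws) < ℓ(w)}` is a spherical subset of `S`; that is, the standard
parabolic subgroup of `W` generated by `In(w)` is finite. -/
theorem in_w_spherical {B : Type*} {W : Type*} [Group W] {M : CoxeterMatrix B}
    (cs : CoxeterSystem M W) (w : W) :
    ((Subgroup.closure
        (cs.simple '' {i : B | cs.length (w * cs.simple i) < cs.length w}) :
      Subgroup W) : Set W).Finite :=
  InWSph.main cs w
end

section
/- Let (W,S) be a Coxeter system with S finite and W infinite, and let ρ := sup{x ∈ ℝ, x ≥ 0 : the family (x^{ℓ(w)})_{w∈W} is summable} be the radius of convergence of the growth series of W. Then the growth series diverges at its radius of convergence: the family (ρ^{ℓ(w)})_{w∈W} is not summable (equivalently, 1/W(ρ) = 0). -/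
open Filter Topology

namespace GrowthSeriesAux

variable {B : Type*} [Fintype B] {W : Type*} [Group W] {M : CoxeterMatrix B}
  (cs : CoxeterSystem M W)

/-- A chosen reduced word for each element. -/
noncomputable def rword (w : W) : List B := (cs.exists_reduced_word w).choose

lemma rword_length (w : W) : (rword cs w).length = cs.length w :=
  ((cs.exists_reduced_word w).choose_spec.1.eq).symm.trans
    (congrArg cs.length (cs.exists_reduced_word w).choose_spec.2.symm)

lemma rword_prod (w : W) : cs.wordProd (rword cs w) = w :=
  ((cs.exists_reduced_word w).choose_spec.2).symm

lemma rword_isReduced (w : W) : cs.IsReduced (rword cs w) := by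
  unfold CoxeterSystem.IsReduced
  rw [rword_prod, rword_length]

lemma fiber_finite (n : ℕ) : Finite {w : W // cs.length w = n} := by
  have hinj : Function.Injective (fun w : {w : W // cs.length w = n} =>
      (⟨rword cs w.1, by rw [rword_length]; exact w.2⟩ : List.Vector B n)) := by
    intro u v huv
    have := congrArg (fun l : List.Vector B n => cs.wordProd l.1) huv
    simp only [rword_prod] at this
    exact Subtype.ext this
  haveI : Finite {l : List B // l.length = n} := (List.finite_length_eq B n).to_subtype
  exact Finite.of_injective _ hinj

/-- The number of elements of length `n`. -/
noncomputable def a (n : ℕ) : ℕ := Nat.card {w : W // cs.length w = n}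

lemma a_le_card (n : ℕ) : a cs n ≤ Fintype.card B ^ n := by
  have hinj : Function.Injective (fun w : {w : W // cs.length w = n} =>
      (⟨rword cs w.1, by rw [rword_length]; exact w.2⟩ : List.Vector B n)) := by
    intro u v huv
    have := congrArg (fun l : List.Vector B n => cs.wordProd l.1) huv
    simp only [rword_prod] at this
    exact Subtype.ext this
  haveI : Finite {l : List B // l.length = n} := (List.finite_length_eq B n).to_subtype
  calc a cs n ≤ Nat.card (List.Vector B n) := Nat.card_le_card_of_injective _ hinj
    _ = Fintype.card B ^ n := by rw [Nat.card_eq_fintype_card, card_vector]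

lemma a_submul (m n : ℕ) : a cs (m + n) ≤ a cs m * a cs n := by
  haveI := fiber_finite cs m
  haveI := fiber_finite cs n
  set f : {w : W // cs.length w = m + n} → {w : W // cs.length w = m} × {w : W // cs.length w = n} :=
    fun w =>
      have hlen : ((rword cs w.1).take m).length = m ∧ ((rword cs w.1).drop m).length = n := by
        constructor <;> simp [rword_length, w.2] <;> omega
      (⟨cs.wordProd ((rword cs w.1).take m), by
          have := ((rword_isReduced cs w.1).take m).eq
          rw [this, hlen.1]⟩,
       ⟨cs.wordProd ((rword cs w.1).drop m), by
          have := ((rword_isReduced cs w.1).drop m).eq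
          rw [this, hlen.2]⟩) with hf
  have hprod : ∀ w, ((f w).1.1 : W) * (f w).2.1 = w.1 := by
    intro w
    rw [hf]
    simp only [← cs.wordProd_append, List.take_append_drop, rword_prod]
  have hinj : Function.Injective f := by
    intro u v huv
    have h1 := hprod u
    rw [huv, hprod v] at h1
    exact Subtype.ext h1.symm
  calc a cs (m + n) ≤ Nat.card ({w : W // cs.length w = m} × {w : W // cs.length w = n}) :=
        Nat.card_le_card_of_injective f hinj
    _ = a cs m * a cs n := Nat.card_prod _ _

lemma a_le_pow_div (N : ℕ) (hN : 0 < N) (m : ℕ) :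
    a cs m ≤ a cs N ^ (m / N) * a cs (m % N) := by
  induction m using Nat.strong_induction_on with
  | _ m ih =>
    by_cases h : m < N
    · simp [Nat.div_eq_of_lt h, Nat.mod_eq_of_lt h]
    · push_neg at h
      have h1 : m = (m - N) + N := by omega
      have h2 : a cs ((m - N) + N) ≤ a cs (m - N) * a cs N := a_submul cs _ _
      have h3 := ih (m - N) (by omega)
      have hdiv : m / N = (m - N) / N + 1 := Nat.div_eq_sub_div hN h
      have hmod : m % N = (m - N) % N := Nat.mod_eq_sub_mod h
      calc a cs m = a cs ((m - N) + N) := congrArg (a cs) h1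
        _ ≤ a cs (m - N) * a cs N := h2
        _ ≤ (a cs N ^ ((m - N) / N) * a cs ((m - N) % N)) * a cs N :=
            Nat.mul_le_mul_right _ h3
        _ = a cs N ^ (m / N) * a cs (m % N) := by rw [hdiv, hmod]; ring

lemma summable_iff (x : ℝ) (hx : 0 ≤ x) :
    Summable (fun w : W => x ^ cs.length w) ↔
      Summable (fun n : ℕ => (a cs n : ℝ) * x ^ n) := by
  rw [← (Equiv.sigmaFiberEquiv cs.length).summable_iff]
  have hcomp : ((fun w : W => x ^ cs.length w) ∘ (Equiv.sigmaFiberEquiv cs.length)) =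
      fun p : Σ n : ℕ, {w : W // cs.length w = n} => x ^ p.1 := by
    funext p
    obtain ⟨n, w, hw⟩ := p
    simp [Equiv.sigmaFiberEquiv, hw]
  rw [hcomp, summable_sigma_of_nonneg (fun p => pow_nonneg hx _)]
  have htsum : ∀ n : ℕ, (∑' _ : {w : W // cs.length w = n}, x ^ n) = (a cs n : ℝ) * x ^ n := by
    intro n
    rw [tsum_const, nsmul_eq_mul]
    rfl
  simp only [htsum]
  exact ⟨fun h => h.2, fun h =>
    ⟨fun n => by haveI := fiber_finite cs n; exact Summable.of_finite, h⟩⟩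

lemma summable_of_pow_lt_one {N : ℕ} (hN : 0 < N) {x : ℝ} (hx : 0 ≤ x)
    (h : (a cs N : ℝ) * x ^ N < 1) : Summable (fun n : ℕ => (a cs n : ℝ) * x ^ n) := by
  set q : ℝ := (a cs N : ℝ) * x ^ N with hq
  have hq0 : 0 ≤ q := mul_nonneg (Nat.cast_nonneg _) (pow_nonneg hx _)
  have hrange : (Finset.range N).Nonempty := ⟨0, Finset.mem_range.mpr hN⟩
  set C : ℝ := (Finset.range N).sup' hrange (fun r => (a cs r : ℝ) * x ^ r) with hC
  have hC0 : 0 ≤ C := by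
    refine le_trans ?_ (Finset.le_sup' (f := fun r => (a cs r : ℝ) * x ^ r)
      (Finset.mem_range.mpr hN))
    positivity
  have hbound : ∀ m : ℕ, (a cs m : ℝ) * x ^ m ≤ C * q ^ (m / N) := by
    intro m
    have h1 : (a cs m : ℝ) ≤ (a cs N : ℝ) ^ (m / N) * (a cs (m % N) : ℝ) := by
      exact_mod_cast a_le_pow_div cs N hN m
    have hx' : x ^ m = (x ^ N) ^ (m / N) * x ^ (m % N) := by
      rw [← pow_mul, ← pow_add]
      congr 1
      exact (Nat.div_add_mod m N).symm
    have h2 : (a cs (m % N) : ℝ) * x ^ (m % N) ≤ C :=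
      Finset.le_sup' (f := fun r => (a cs r : ℝ) * x ^ r)
        (Finset.mem_range.mpr (Nat.mod_lt _ hN))
    calc (a cs m : ℝ) * x ^ m
        ≤ ((a cs N : ℝ) ^ (m / N) * (a cs (m % N) : ℝ)) * x ^ m :=
          mul_le_mul_of_nonneg_right h1 (pow_nonneg hx _)
      _ = q ^ (m / N) * ((a cs (m % N) : ℝ) * x ^ (m % N)) := by
          rw [hx', hq, mul_pow]; ring
      _ ≤ q ^ (m / N) * C := by
          exact mul_le_mul_of_nonneg_left h2 (pow_nonneg hq0 _)
      _ = C * q ^ (m / N) := mul_comm _ _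
  haveI : NeZero N := ⟨hN.ne'⟩
  have hmaj : Summable (fun m : ℕ => C * q ^ (m / N)) := by
    have hprod : Summable (fun p : ℕ × Fin N => C * q ^ p.1) := by
      rw [summable_prod_of_nonneg (fun p => by positivity)]
      refine ⟨fun k => Summable.of_finite, ?_⟩
      have : (fun k : ℕ => ∑' _ : Fin N, C * q ^ k) = fun k : ℕ => (N : ℝ) * (C * q ^ k) := by
        funext k
        rw [tsum_const, nsmul_eq_mul]
        simp
      rw [this]
      exact (((summable_geometric_of_lt_one hq0 h).mul_left C).mul_left _)
    have := hprod.comp_injective (Nat.divModEquiv N).injective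
    simpa [Nat.divModEquiv, Function.comp_def] using this
  exact Summable.of_nonneg_of_le (fun m => by positivity) hbound hmaj

end GrowthSeriesAux

open GrowthSeriesAux

/-- **The growth series diverges at its radius of convergence.**
Let `(W, S)` be a Coxeter system with `S` finite and `W` infinite, and let
`ρ = sup {x ≥ 0 : (x^{ℓ w})_{w ∈ W} is summable}` be the radius of convergence of the growth
series of `W`.  Then the family `(ρ^{ℓ w})_{w ∈ W}` is not summable
(equivalently, `1/W(ρ) = 0`). -/
theorem growth_series_diverges_at_radius {B : Type*} [Fintype B] {W : Type*} [Group W]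
    [Infinite W] {M : CoxeterMatrix B} (cs : CoxeterSystem M W) :
    ¬ Summable (fun w : W =>
      (sSup {x : ℝ | 0 ≤ x ∧ Summable (fun w : W => x ^ cs.length w)}) ^ cs.length w) := by
  intro hsum
  set S : Set ℝ := {x : ℝ | 0 ≤ x ∧ Summable (fun w : W => x ^ cs.length w)} with hSdef
  set c : ℝ := (Fintype.card B : ℝ) + 1 with hc
  have hcard : (Fintype.card B : ℝ) ≤ c := by simp [hc]
  have hcpos : 0 < c := by positivity
  set x₀ : ℝ := 1 / (2 * c) with hx₀
  have hx₀pos : 0 < x₀ := by positivity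
  have hax : ∀ n : ℕ, (a cs n : ℝ) * x₀ ^ n ≤ (1 / 2 : ℝ) ^ n := by
    intro n
    have h1 : (a cs n : ℝ) ≤ (Fintype.card B : ℝ) ^ n := by
      exact_mod_cast a_le_card cs n
    have h2 : (a cs n : ℝ) ≤ c ^ n :=
      h1.trans (pow_le_pow_left₀ (by positivity) hcard n)
    calc (a cs n : ℝ) * x₀ ^ n ≤ c ^ n * x₀ ^ n :=
          mul_le_mul_of_nonneg_right h2 (pow_nonneg hx₀pos.le n)
      _ = (c * x₀) ^ n := (mul_pow _ _ _).symm
      _ = (1 / 2 : ℝ) ^ n := by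
          congr 1
          rw [hx₀]
          field_simp
  have hx₀S : x₀ ∈ S := ⟨hx₀pos.le, (summable_iff cs x₀ hx₀pos.le).mpr
    (Summable.of_nonneg_of_le (fun n => by positivity) hax
      (summable_geometric_of_lt_one (by norm_num) (by norm_num)))⟩
  have hbdd : BddAbove S := by
    refine ⟨1, fun x hx => ?_⟩
    by_contra hlt
    push_neg at hlt
    have h1 : ∀ w : W, (1 : ℝ) ≤ x ^ cs.length w := fun w => one_le_pow₀ hlt.le
    have h3 : ∀ᶠ w : W in Filter.cofinite, x ^ cs.length w < 1 :=
      hx.2.tendsto_cofinite_zero.eventually_lt_const one_pos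
    obtain ⟨w, hw⟩ := h3.exists
    exact absurd (h1 w) (not_le.mpr hw)
  set ρ : ℝ := sSup S with hρ
  have hρx₀ : x₀ ≤ ρ := le_csSup hbdd hx₀S
  have hρ0 : 0 ≤ ρ := hx₀pos.le.trans hρx₀
  have hsum' : Summable (fun n : ℕ => (a cs n : ℝ) * ρ ^ n) :=
    (summable_iff cs ρ hρ0).mp hsum
  have hev : ∀ᶠ n in Filter.atTop, (a cs n : ℝ) * ρ ^ n < 1 / 2 :=
    hsum'.tendsto_atTop_zero.eventually_lt_const (by norm_num)
  obtain ⟨N, hN1, hNlt⟩ := ((Filter.eventually_ge_atTop 1).and hev).exists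
  have hcont : ContinuousAt (fun y : ℝ => (a cs N : ℝ) * y ^ N) ρ := by fun_prop
  have hev2 : ∀ᶠ y in nhds ρ, (a cs N : ℝ) * y ^ N < 1 :=
    hcont.eventually_lt_const (show (a cs N : ℝ) * ρ ^ N < 1 by linarith)
  have hev3 : ∀ᶠ y in nhdsWithin ρ (Set.Ioi ρ), (a cs N : ℝ) * y ^ N < 1 :=
    hev2.filter_mono nhdsWithin_le_nhds
  obtain ⟨y, hylt, hyρ⟩ := (hev3.and self_mem_nhdsWithin).exists
  have hyρ' : ρ < y := hyρ
  have hy0 : 0 ≤ y := hρ0.trans hyρ'.le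
  have hyS : y ∈ S := ⟨hy0, (summable_iff cs y hy0).mpr
    (summable_of_pow_lt_one cs hN1 hy0 hylt)⟩
  exact absurd (le_csSup hbdd hyS) (not_le.mpr hyρ')
end

section
/- Let Y be a real Hilbert space, X a closed subspace of Y, P_X : Y → Y the orthogonal projection onto X, and y ∈ Y a unit vector. Define A(y) ∈ [0,∞] as the infimum of {‖x‖ : x ∈ X, ⟨x,y⟩ = 1}, with the convention that the infimum of the empty set is +∞. Then ⟨P_X(y), y⟩ = A(y)⁻², with the convention (+∞)⁻² = 0. -/
/-- **A Hilbert space projection formula.**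
Let `Y` be a real Hilbert space, `X` a closed subspace of `Y`, and `y ∈ Y` a unit vector.
Let `v = P_X y` be the orthogonal projection of `y` onto `X` (characterized by `v ∈ X` and
`y - v ∈ Xᗮ`).  Define `A(y) ∈ [0,∞]` as the infimum of `{‖x‖ : x ∈ X, ⟨x,y⟩ = 1}` (with the
infimum of the empty set being `+∞`).  Then `⟨P_X y, y⟩ = A(y)⁻²`, with the convention
`(+∞)⁻² = 0`. -/
theorem hilbert_projection_inf_formula {Y : Type*} [NormedAddCommGroup Y]
    [InnerProductSpace ℝ Y] [CompleteSpace Y]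
    (X : Submodule ℝ Y) (hX : IsClosed (X : Set Y))
    (y : Y) (hy : ‖y‖ = 1)
    (v : Y) (hvX : v ∈ X) (hperp : y - v ∈ Xᗮ) :
    ENNReal.ofReal (inner ℝ v y : ℝ) =
      (⨅ x ∈ {x : Y | x ∈ X ∧ (inner ℝ x y : ℝ) = 1}, ENNReal.ofReal ‖x‖)⁻¹ ^ 2 := by
  -- For any x ∈ X, ⟪x, y⟫ = ⟪x, v⟫
  have key : ∀ x ∈ X, (inner ℝ x y : ℝ) = inner ℝ x v := by
    intro x hx
    have h0 : (inner ℝ x (y - v) : ℝ) = 0 :=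
      (Submodule.mem_orthogonal X (y - v)).mp hperp x hx
    rw [inner_sub_right] at h0
    linarith
  have hvy : (inner ℝ v y : ℝ) = ‖v‖ ^ 2 := by
    rw [key v hvX, real_inner_self_eq_norm_sq]
  by_cases hv : v = 0
  · -- Set is empty; infimum is ⊤, RHS is 0.
    subst hv
    have hempty : {x : Y | x ∈ X ∧ (inner ℝ x y : ℝ) = 1} = ∅ := by
      ext x
      simp only [Set.mem_setOf_eq, Set.mem_empty_iff_false, iff_false, not_and]
      intro hx
      rw [key x hx, inner_zero_right]
      norm_num
    rw [hempty]
    simp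
  · have hvn : (0:ℝ) < ‖v‖ := norm_pos_iff.mpr hv
    have hinf : (⨅ x ∈ {x : Y | x ∈ X ∧ (inner ℝ x y : ℝ) = 1}, ENNReal.ofReal ‖x‖)
        = ENNReal.ofReal ‖v‖⁻¹ := by
      apply le_antisymm
      · -- witness x = v / ‖v‖²
        have hmem : (‖v‖ ^ 2)⁻¹ • v ∈ {x : Y | x ∈ X ∧ (inner ℝ x y : ℝ) = 1} := by
          constructor
          · exact X.smul_mem _ hvX
          · rw [real_inner_smul_left, key v hvX, real_inner_self_eq_norm_sq]
            field_simp
        calc (⨅ x ∈ {x : Y | x ∈ X ∧ (inner ℝ x y : ℝ) = 1}, ENNReal.ofReal ‖x‖)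
            ≤ ENNReal.ofReal ‖(‖v‖ ^ 2)⁻¹ • v‖ := biInf_le _ hmem
          _ = ENNReal.ofReal ‖v‖⁻¹ := by
              rw [norm_smul]
              congr 1
              rw [Real.norm_eq_abs, abs_of_pos (by positivity)]
              field_simp
      · refine le_iInf₂ fun x hx => ?_
        obtain ⟨hxX, hxy⟩ := hx
        have h1 : (1:ℝ) = inner ℝ x v := by rw [← key x hxX, hxy]
        have h2 : (1:ℝ) ≤ ‖x‖ * ‖v‖ := by
          calc (1:ℝ) = inner ℝ x v := h1
            _ ≤ ‖x‖ * ‖v‖ := real_inner_le_norm x v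
        have h3 : ‖v‖⁻¹ ≤ ‖x‖ := by
          rw [inv_le_iff_one_le_mul₀ hvn]
          linarith
        exact ENNReal.ofReal_le_ofReal h3
    rw [hinf, ← ENNReal.ofReal_inv_of_pos (by positivity), inv_inv,
      ← ENNReal.ofReal_pow (norm_nonneg v), hvy]
end
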